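/- arXiv:1606.07380 — 13 statements merged into one kernel-verified Lean document; each statement's English description precedes it below -/
import Mathlib

section
/- Let X be a finite nonempty set and F : X → ℝ² a map, and let V = conv(F(X)) + ℝ²₊ be the Minkowski sum of the convex hull of the image of F with the nonnegative orthant. Then for every λ ≥ 0 there exists x ∈ X such that F(x) is an extreme point of V and F(x)₁ + λ·F(x)₂ ≤ F(y)₁ + λ·F(y)₂ for all y ∈ X; that is, the weighted-sum problem min_{x∈X} f₁(x) + λ f₂(x) always admits an optimal solution that is an efficient extreme solution. -/
open Pointwise

private lemma combo_eq {a b r s m : ℝ} (ha : 0 < a) (hb : 0 < b) (hab : a + b = 1)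
    (hr : m ≤ r) (hs : m ≤ s) (h : a * r + b * s = m) : r = m ∧ s = m := by
  have h1 : a * (r - m) + b * (s - m) = 0 := by linear_combination h - m * hab
  have h2 : 0 ≤ a * (r - m) := mul_nonneg ha.le (by linarith)
  have h3 : 0 ≤ b * (s - m) := mul_nonneg hb.le (by linarith)
  have h4 : a * (r - m) = 0 := by linarith
  have h5 : b * (s - m) = 0 := by linarith
  constructor
  · rcases mul_eq_zero.1 h4 with h | h
    · exact absurd h (ne_of_gt ha)
    · linarith
  · rcases mul_eq_zero.1 h5 with h | h
    · exact absurd h (ne_of_gt hb)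
    · linarith

/-- For every `λ ≥ 0` the weighted-sum problem `min_{x ∈ X} f₁(x) + λ f₂(x)`
admits an optimal solution that is an efficient extreme solution, i.e. whose image under `F`
is an extreme point of `V = conv(F(X)) + ℝ²₊`. -/
theorem weighted_sum_has_extreme_optimal_solution
    {α : Type*} (X : Finset α) (hX : X.Nonempty) (F : α → (Fin 2 → ℝ)) :
    ∀ lam : ℝ, 0 ≤ lam →
      ∃ x ∈ X,
        F x ∈ (convexHull ℝ (F '' (X : Set α)) +
            {v : Fin 2 → ℝ | 0 ≤ v}).extremePoints ℝ ∧
        ∀ y ∈ X, F x 0 + lam * F x 1 ≤ F y 0 + lam * F y 1 := by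
  intro lam hlam
  obtain ⟨x0, hx0, hmin0⟩ := X.exists_min_image (fun y => F y 0 + lam * F y 1) hX
  set μ := F x0 0 + lam * F x0 1 with hμ
  have hSne : (X.filter (fun y => F y 0 + lam * F y 1 = μ)).Nonempty :=
    ⟨x0, Finset.mem_filter.2 ⟨hx0, rfl⟩⟩
  obtain ⟨x, hxS, hmin1⟩ :=
    (X.filter (fun y => F y 0 + lam * F y 1 = μ)).exists_min_image (fun y => F y 1) hSne
  have hxX : x ∈ X := (Finset.mem_filter.1 hxS).1
  have hφx : F x 0 + lam * F x 1 = μ := (Finset.mem_filter.1 hxS).2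
  have hψ : ∀ y ∈ X, F y 0 + lam * F y 1 = μ → F x 1 ≤ F y 1 := by
    intro y hy hyμ
    exact hmin1 y (Finset.mem_filter.2 ⟨hy, hyμ⟩)
  refine ⟨x, hxX, ?_, ?_⟩
  swap
  · intro y hy; rw [hφx]; exact hmin0 y hy
  -- `F x` belongs to `V`
  have hFxC : F x ∈ convexHull ℝ (F '' (X : Set α)) :=
    subset_convexHull ℝ _ ⟨x, hxX, rfl⟩
  have hFxV : F x ∈
      convexHull ℝ (F '' (X : Set α)) + {v : Fin 2 → ℝ | 0 ≤ v} := by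
    have h0 : (0 : Fin 2 → ℝ) ∈ {v : Fin 2 → ℝ | 0 ≤ v} := by
      simp only [Set.mem_setOf_eq]; exact le_rfl
    have := Set.add_mem_add hFxC h0
    simpa using this
  -- the convex "lexicographic" set
  set K : Set (Fin 2 → ℝ) :=
    {v | μ ≤ v 0 + lam * v 1 ∧ (v 0 + lam * v 1 = μ → F x 1 ≤ v 1)} with hK
  have hKconv : Convex ℝ K := by
    rintro v ⟨hv1, hv2⟩ w ⟨hw1, hw2⟩ a b ha hb hab
    have hc0 : (a • v + b • w) 0 = a * v 0 + b * w 0 := by simp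
    have hc1 : (a • v + b • w) 1 = a * v 1 + b * w 1 := by simp
    have habμ : a * μ + b * μ = μ := by linear_combination μ * hab
    constructor
    · rw [hc0, hc1]
      linarith [mul_le_mul_of_nonneg_left hv1 ha, mul_le_mul_of_nonneg_left hw1 hb]
    · rw [hc0, hc1]
      intro heq
      have hsum0 : a * (v 0 + lam * v 1 - μ) + b * (w 0 + lam * w 1 - μ) = 0 := by
        linear_combination heq - μ * hab
      have hA1 : 0 ≤ a * (v 0 + lam * v 1 - μ) := mul_nonneg ha (by linarith)
      have hA2 : 0 ≤ b * (w 0 + lam * w 1 - μ) := mul_nonneg hb (by linarith)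
      have hA1' : a * (v 0 + lam * v 1 - μ) = 0 := by linarith
      have hA2' : b * (w 0 + lam * w 1 - μ) = 0 := by linarith
      have habν : a * F x 1 + b * F x 1 = F x 1 := by linear_combination F x 1 * hab
      rcases ha.eq_or_lt with ha0 | ha0
      · have hb1 : b = 1 := by linarith
        have hwμ : w 0 + lam * w 1 = μ := by
          rw [hb1] at hA2'; linarith
        have := hw2 hwμ
        rw [← ha0, hb1]; linarith
      · rcases hb.eq_or_lt with hb0 | hb0
        · have ha1 : a = 1 := by linarith
          have hvμ : v 0 + lam * v 1 = μ := by
            rw [ha1] at hA1'; linarith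
          have := hv2 hvμ
          rw [← hb0, ha1]; linarith
        · have hvμ : v 0 + lam * v 1 = μ := by
            rcases mul_eq_zero.1 hA1' with h | h
            · exact absurd h (ne_of_gt ha0)
            · linarith
          have hwμ : w 0 + lam * w 1 = μ := by
            rcases mul_eq_zero.1 hA2' with h | h
            · exact absurd h (ne_of_gt hb0)
            · linarith
          linarith [mul_le_mul_of_nonneg_left (hv2 hvμ) ha,
            mul_le_mul_of_nonneg_left (hw2 hwμ) hb]
  have hsub : convexHull ℝ (F '' (X : Set α)) ⊆ K := by
    apply convexHull_min _ hKconv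
    rintro _ ⟨y, hy, rfl⟩
    exact ⟨hmin0 y hy, fun h => hψ y hy h⟩
  rw [mem_extremePoints]
  refine ⟨hFxV, ?_⟩
  rintro v1 hv1 v2 hv2 hseg
  obtain ⟨c1, hc1, p1, hp1, rfl⟩ := Set.mem_add.1 hv1
  obtain ⟨c2, hc2, p2, hp2, rfl⟩ := Set.mem_add.1 hv2
  obtain ⟨a, b, ha, hb, hab, hsum⟩ := hseg
  have hp10 : (0 : ℝ) ≤ p1 0 := hp1 0
  have hp11 : (0 : ℝ) ≤ p1 1 := hp1 1
  have hp20 : (0 : ℝ) ≤ p2 0 := hp2 0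
  have hp21 : (0 : ℝ) ≤ p2 1 := hp2 1
  have hKc1 := hsub hc1
  have hKc2 := hsub hc2
  have hKc1a : μ ≤ c1 0 + lam * c1 1 := hKc1.1
  have hKc2a : μ ≤ c2 0 + lam * c2 1 := hKc2.1
  have eq0 : a * c1 0 + a * p1 0 + (b * c2 0 + b * p2 0) = F x 0 := by
    have := congrFun hsum 0; simpa using this
  have eq1 : a * c1 1 + a * p1 1 + (b * c2 1 + b * p2 1) = F x 1 := by
    have := congrFun hsum 1; simpa using this
  have hl1 : (0 : ℝ) ≤ lam * p1 1 := mul_nonneg hlam hp11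
  have hl2 : (0 : ℝ) ≤ lam * p2 1 := mul_nonneg hlam hp21
  -- tightness of the first functional
  have hφv1 : μ ≤ (c1 0 + p1 0) + lam * (c1 1 + p1 1) := by linarith [hKc1a, hp10, hl1]
  have hφv2 : μ ≤ (c2 0 + p2 0) + lam * (c2 1 + p2 1) := by linarith [hKc2a, hp20, hl2]
  have hφcombo : a * ((c1 0 + p1 0) + lam * (c1 1 + p1 1)) +
      b * ((c2 0 + p2 0) + lam * (c2 1 + p2 1)) = μ := by
    linear_combination eq0 + lam * eq1 + hφx
  obtain ⟨hφ1, hφ2⟩ := combo_eq ha hb hab hφv1 hφv2 hφcombo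
  have hφp1 : p1 0 + lam * p1 1 = 0 := by linarith [hKc1a, hφ1, hp10, hl1]
  have hφp2 : p2 0 + lam * p2 1 = 0 := by linarith [hKc2a, hφ2, hp20, hl2]
  have hφc1 : c1 0 + lam * c1 1 = μ := by linarith [hφ1, hφp1]
  have hφc2 : c2 0 + lam * c2 1 = μ := by linarith [hφ2, hφp2]
  have hp10z : p1 0 = 0 := by linarith
  have hp20z : p2 0 = 0 := by linarith
  -- tightness of the second functional
  have hψc1 : F x 1 ≤ c1 1 := hKc1.2 hφc1
  have hψc2 : F x 1 ≤ c2 1 := hKc2.2 hφc2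
  have hψv1 : F x 1 ≤ c1 1 + p1 1 := by linarith
  have hψv2 : F x 1 ≤ c2 1 + p2 1 := by linarith
  have eq1' : a * (c1 1 + p1 1) + b * (c2 1 + p2 1) = F x 1 := by
    linear_combination eq1
  obtain ⟨hψ1, hψ2⟩ := combo_eq ha hb hab hψv1 hψv2 eq1'
  have hp11z : p1 1 = 0 := by linarith
  have hp21z : p2 1 = 0 := by linarith
  have hc11 : c1 1 = F x 1 := by linarith
  have hc21 : c2 1 = F x 1 := by linarith
  have hFx0 : F x 0 = μ - lam * F x 1 := by linarith
  have hc10 : c1 0 = F x 0 := by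
    rw [hFx0]; rw [hc11] at hφc1; linarith
  have hc20 : c2 0 = F x 0 := by
    rw [hFx0]; rw [hc21] at hφc2; linarith
  constructor <;> funext i <;> fin_cases i
  · show c1 0 + p1 0 = F x 0; linarith
  · show c1 1 + p1 1 = F x 1; linarith
  · show c2 0 + p2 0 = F x 0; linarith
  · show c2 1 + p2 1 = F x 1; linarith
end

section
/- Let X be a finite nonempty set, F : X → ℝ², and V = conv(F(X)) + ℝ²₊. Then for every extreme point v of V there exists λ ≥ 0 such that v₁ + λ·v₂ < w₁ + λ·w₂ for all w ∈ V with w ≠ v. Consequently, every subset S ⊆ X with the property that for each λ ≥ 0 some x ∈ S minimizes F(x)₁ + λ·F(x)₂ over X must satisfy extremePoints(V) ⊆ F(S); in particular |S| is at least the number of extreme points of V. -/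
open Pointwise

/-- `conv(F(X)) + ℝ²₊` for a set of objective vectors. -/
noncomputable def objSpacePolytope (S : Set (Fin 2 → ℝ)) : Set (Fin 2 → ℝ) :=
  convexHull ℝ S + {v : Fin 2 → ℝ | 0 ≤ v}

lemma objAux.convexHull_subset (S : Set (Fin 2 → ℝ)) :
    convexHull ℝ S ⊆ objSpacePolytope S :=
  fun a ha => ⟨a, ha, 0, Set.mem_setOf.2 le_rfl, add_zero a⟩

lemma objAux.subset (S : Set (Fin 2 → ℝ)) : S ⊆ objSpacePolytope S :=
  fun a ha => objAux.convexHull_subset S (subset_convexHull ℝ S ha)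

lemma objAux.convex (S : Set (Fin 2 → ℝ)) : Convex ℝ (objSpacePolytope S) := by
  have h : {v : Fin 2 → ℝ | 0 ≤ v} = Set.Ici (0 : Fin 2 → ℝ) := rfl
  exact (convex_convexHull ℝ S).add (h ▸ convex_Ici (0 : Fin 2 → ℝ))

lemma objAux.add_mem (S : Set (Fin 2 → ℝ)) {w : Fin 2 → ℝ} (hw : w ∈ objSpacePolytope S)
    {c : Fin 2 → ℝ} (hc : 0 ≤ c) : w + c ∈ objSpacePolytope S := by
  obtain ⟨a, ha, d, hd, rfl⟩ := hw
  exact ⟨a, ha, d + c, add_nonneg hd hc, (add_assoc a d c).symm⟩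

/-- If `v` is an extreme point of `V` and `v = a + c` with `a ∈ V`, `c ≥ 0`, then `a = v`. -/
lemma objAux.extreme_add {S : Set (Fin 2 → ℝ)} {v a c : Fin 2 → ℝ}
    (hv : v ∈ (objSpacePolytope S).extremePoints ℝ) (ha : a ∈ objSpacePolytope S)
    (hc : 0 ≤ c) (hvac : v = a + c) : a = v := by
  by_cases hc0 : c = 0
  · rw [hvac, hc0, add_zero]
  · have h2 : a + 2 • c ∈ objSpacePolytope S :=
      objAux.add_mem S ha (by positivity)
    have hseg : v ∈ openSegment ℝ a (a + 2 • c) := by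
      refine ⟨1/2, 1/2, by norm_num, by norm_num, by norm_num, ?_⟩
      rw [hvac]; module
    exact hv.2 ha h2 hseg

/-- An extreme point is Pareto optimal. -/
lemma objAux.pareto {S : Set (Fin 2 → ℝ)} {v p : Fin 2 → ℝ}
    (hv : v ∈ (objSpacePolytope S).extremePoints ℝ) (hp : p ∈ objSpacePolytope S)
    (hpv : p ≤ v) : p = v :=
  objAux.extreme_add hv hp (sub_nonneg.2 hpv) (by abel)

/-- Generic interleaving lemma. -/
lemma objAux.exists_sep {ι : Type*} (FA FB : Finset ι) (gA gB : ι → ℝ)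
    (hApos : ∀ p ∈ FA, 0 < gA p) (hBpos : ∀ q ∈ FB, 0 < gB q)
    (hcross : ∀ p ∈ FA, ∀ q ∈ FB, gA p < gB q) :
    ∃ lam : ℝ, 0 < lam ∧ (∀ p ∈ FA, gA p < lam) ∧ (∀ q ∈ FB, lam < gB q) := by
  by_cases hA : FA.Nonempty
  · have ha : 0 < FA.sup' hA gA := (Finset.lt_sup'_iff hA).2 ⟨hA.choose, hA.choose_spec,
      hApos _ hA.choose_spec⟩
    by_cases hB : FB.Nonempty
    · set a := FA.sup' hA gA with ha'
      set b := FB.inf' hB gB with hb'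
      have hab : a < b := (Finset.sup'_lt_iff hA).2 fun p hp =>
        (Finset.lt_inf'_iff hB).2 fun q hq => hcross p hp q hq
      refine ⟨(a + b) / 2, by linarith, fun p hp => ?_, fun q hq => ?_⟩
      · have := Finset.le_sup' gA hp; rw [← ha'] at this; linarith
      · have := Finset.inf'_le gB hq; rw [← hb'] at this; linarith
    · refine ⟨FA.sup' hA gA + 1, by linarith, fun p hp => ?_, fun q hq => ?_⟩
      · have := Finset.le_sup' gA hp; linarith
      · exact absurd ⟨q, hq⟩ hB
  · by_cases hB : FB.Nonempty
    · have hb : 0 < FB.inf' hB gB := (Finset.lt_inf'_iff hB).2 fun q hq => hBpos q hq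
      refine ⟨FB.inf' hB gB / 2, by linarith, fun p hp => absurd ⟨p, hp⟩ hA, fun q hq => ?_⟩
      have := Finset.inf'_le gB hq; linarith
    · exact ⟨1, one_pos, fun p hp => absurd ⟨p, hp⟩ hA, fun q hq => absurd ⟨q, hq⟩ hB⟩

/-- Strict exposure over the generating finite set. -/
lemma objAux.exists_lam_finset (P : Finset (Fin 2 → ℝ)) {v : Fin 2 → ℝ}
    (hv : v ∈ (objSpacePolytope ↑P).extremePoints ℝ) :
    ∃ lam : ℝ, 0 < lam ∧ ∀ p ∈ P, p ≠ v → v 0 + lam * v 1 < p 0 + lam * p 1 := by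
  classical
  have hPV : (↑P : Set (Fin 2 → ℝ)) ⊆ objSpacePolytope ↑P := objAux.subset _
  have hpareto : ∀ p ∈ objSpacePolytope (↑P : Set (Fin 2 → ℝ)), p ≤ v → p = v :=
    fun p hp hpv => objAux.pareto hv hp hpv
  -- classification of points in P
  have hclass : ∀ p ∈ P, p ≠ v → (p 0 < v 0 → v 1 < p 1) ∧ (p 1 < v 1 → v 0 < p 0) := by
    intro p hp hpv
    have hnle : ¬ p ≤ v := fun hle => hpv (hpareto p (hPV hp) hle)
    constructor
    · intro h0
      by_contra h1
      push_neg at h1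
      refine hnle ?_
      rw [Pi.le_def]
      intro i; fin_cases i
      · exact h0.le
      · exact h1
    · intro h1
      by_contra h0
      push_neg at h0
      refine hnle ?_
      rw [Pi.le_def]
      intro i; fin_cases i
      · exact h0
      · exact h1.le
  set FA := P.filter (fun p => p 0 < v 0) with hFA
  set FB := P.filter (fun p => p 1 < v 1) with hFB
  have hFAmem : ∀ p ∈ FA, p 0 < v 0 ∧ v 1 < p 1 := by
    intro p hp
    rw [hFA, Finset.mem_filter] at hp
    refine ⟨hp.2, (hclass p hp.1 ?_).1 hp.2⟩
    intro h; rw [h] at hp; exact lt_irrefl _ hp.2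
  have hFBmem : ∀ q ∈ FB, q 1 < v 1 ∧ v 0 < q 0 := by
    intro q hq
    rw [hFB, Finset.mem_filter] at hq
    refine ⟨hq.2, (hclass q hq.1 ?_).2 hq.2⟩
    intro h; rw [h] at hq; exact lt_irrefl _ hq.2
  set gA : (Fin 2 → ℝ) → ℝ := fun p => (v 0 - p 0) / (p 1 - v 1) with hgA
  set gB : (Fin 2 → ℝ) → ℝ := fun q => (q 0 - v 0) / (v 1 - q 1) with hgB
  have hApos : ∀ p ∈ FA, 0 < gA p := fun p hp => by
    obtain ⟨h0, h1⟩ := hFAmem p hp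
    exact div_pos (by linarith) (by linarith)
  have hBpos : ∀ q ∈ FB, 0 < gB q := fun q hq => by
    obtain ⟨h1, h0⟩ := hFBmem q hq
    exact div_pos (by linarith) (by linarith)
  have hcross : ∀ p ∈ FA, ∀ q ∈ FB, gA p < gB q := by
    intro p hp q hq
    obtain ⟨hp0, hp1⟩ := hFAmem p hp
    obtain ⟨hq1, hq0⟩ := hFBmem q hq
    rw [hFA, Finset.mem_filter] at hp
    rw [hFB, Finset.mem_filter] at hq
    by_contra hle
    push_neg at hle
    rw [hgA, hgB] at hle
    have hd1 : (0:ℝ) < p 1 - v 1 := by linarith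
    have hd2 : (0:ℝ) < v 1 - q 1 := by linarith
    have hkey : (q 0 - v 0) * (p 1 - v 1) ≤ (v 0 - p 0) * (v 1 - q 1) :=
      (div_le_div_iff₀ hd2 hd1).1 hle
    -- construct the point m on segment [p,q] at height v 1
    set t : ℝ := (v 1 - q 1) / (p 1 - q 1) with ht
    have hpq : (0:ℝ) < p 1 - q 1 := by linarith
    have ht0 : 0 < t := div_pos hd2 hpq
    have ht1 : t < 1 := (div_lt_one hpq).2 (by linarith)
    set m : Fin 2 → ℝ := t • p + (1 - t) • q with hm
    have hmmem : m ∈ objSpacePolytope (↑P : Set (Fin 2 → ℝ)) :=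
      objAux.convex _ (hPV hp.1) (hPV hq.1) ht0.le (by linarith) (by ring)
    have hts : t * (p 1 - q 1) = v 1 - q 1 := by
      rw [ht]; field_simp
    have hm1 : m 1 = v 1 := by
      have : m 1 = t * p 1 + (1 - t) * q 1 := by
        rw [hm]; simp [Pi.add_apply, Pi.smul_apply, smul_eq_mul]
      rw [this]; linear_combination hts
    have hm0 : m 0 ≤ v 0 := by
      have hmeq : m 0 = t * p 0 + (1 - t) * q 0 := by
        rw [hm]; simp [Pi.add_apply, Pi.smul_apply, smul_eq_mul]
      have hexp : (t * p 0 + (1 - t) * q 0 - v 0) * (p 1 - q 1) =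
          (q 0 - v 0) * (p 1 - v 1) - (v 0 - p 0) * (v 1 - q 1) +
            (t * (p 1 - q 1) - (v 1 - q 1)) * (p 0 - q 0) := by ring
      have h2 : (t * p 0 + (1 - t) * q 0 - v 0) * (p 1 - q 1) ≤ 0 := by
        rw [hexp, hts, sub_self, zero_mul, add_zero]; linarith
      rw [hmeq]
      nlinarith [h2, hpq]
    have hmv : m = v := by
      refine hpareto m hmmem fun i => ?_
      fin_cases i
      · exact hm0
      · exact le_of_eq hm1
    have hseg : v ∈ openSegment ℝ p q := ⟨t, 1 - t, ht0, by linarith, by ring, by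
      rw [← hm, hmv]⟩
    have := hv.2 (hPV hp.1) (hPV hq.1) hseg
    rw [this] at hp0
    exact lt_irrefl _ hp0
  obtain ⟨lam, hlam, hAlt, hBlt⟩ := objAux.exists_sep FA FB gA gB hApos hBpos hcross
  refine ⟨lam, hlam, fun p hp hpv => ?_⟩
  rcases lt_trichotomy (p 0) (v 0) with h0 | h0 | h0
  · -- p ∈ FA
    have hpA : p ∈ FA := by rw [hFA, Finset.mem_filter]; exact ⟨hp, h0⟩
    obtain ⟨_, hp1⟩ := hFAmem p hpA
    have := hAlt p hpA
    rw [hgA, div_lt_iff₀ (by linarith : (0:ℝ) < p 1 - v 1)] at this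
    nlinarith
  · -- p 0 = v 0
    have hp1 : v 1 < p 1 := by
      rcases lt_trichotomy (p 1) (v 1) with h1 | h1 | h1
      · exfalso; have := (hclass p hp hpv).2 h1; linarith
      · exact absurd (funext fun i => by fin_cases i <;> simp [h0, h1]) hpv
      · exact h1
    nlinarith
  · rcases lt_trichotomy (p 1) (v 1) with h1 | h1 | h1
    · have hpB : p ∈ FB := by rw [hFB, Finset.mem_filter]; exact ⟨hp, h1⟩
      have := hBlt p hpB
      rw [hgB, lt_div_iff₀ (by linarith : (0:ℝ) < v 1 - p 1)] at this
      nlinarith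
    · nlinarith
    · nlinarith

/-- From strict min over `P` with `lam > 0` to strict min over `V`. -/
lemma objAux.strict_min (P : Finset (Fin 2 → ℝ)) {v : Fin 2 → ℝ} {lam : ℝ}
    (hlam : 0 < lam)
    (hmin : ∀ p ∈ P, p ≠ v → v 0 + lam * v 1 < p 0 + lam * p 1) :
    ∀ w ∈ objSpacePolytope (↑P : Set (Fin 2 → ℝ)), w ≠ v →
      v 0 + lam * v 1 < w 0 + lam * w 1 := by
  classical
  intro w hw hwv
  obtain ⟨a, ha, c, hc, rfl⟩ := hw
  rw [P.convexHull_eq] at ha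
  obtain ⟨μ, hμ0, hμ1, hma⟩ := ha
  rw [Finset.centerMass_eq_of_sum_1 _ _ hμ1] at hma
  simp only [id_eq] at hma
  have hc0 : (0:ℝ) ≤ c 0 := hc 0
  have hc1 : (0:ℝ) ≤ c 1 := hc 1
  have ha0 : a 0 = ∑ y ∈ P, μ y * y 0 := by
    rw [← hma]; simp [Finset.sum_apply]
  have ha1 : a 1 = ∑ y ∈ P, μ y * y 1 := by
    rw [← hma]; simp [Finset.sum_apply]
  have hLa : ∀ hcase : ∃ y ∈ P, μ y ≠ 0 ∧ y ≠ v,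
      v 0 + lam * v 1 < a 0 + lam * a 1 := by
    intro ⟨y₀, hy₀P, hy₀μ, hy₀v⟩
    have hsum : ∑ y ∈ P, μ y * (v 0 + lam * v 1) < ∑ y ∈ P, μ y * (y 0 + lam * y 1) := by
      refine Finset.sum_lt_sum (fun y hy => ?_) ⟨y₀, hy₀P, ?_⟩
      · by_cases h : y = v
        · rw [h]
        · exact mul_le_mul_of_nonneg_left (hmin y hy h).le (hμ0 y hy)
      · exact mul_lt_mul_of_pos_left (hmin y₀ hy₀P hy₀v)
          (lt_of_le_of_ne (hμ0 y₀ hy₀P) (Ne.symm hy₀μ))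
    calc v 0 + lam * v 1 = ∑ y ∈ P, μ y * (v 0 + lam * v 1) := by
          rw [← Finset.sum_mul, hμ1, one_mul]
      _ < ∑ y ∈ P, μ y * (y 0 + lam * y 1) := hsum
      _ = a 0 + lam * a 1 := by
          rw [ha0, ha1, Finset.mul_sum, ← Finset.sum_add_distrib]
          exact Finset.sum_congr rfl fun y _ => by ring
  by_cases hcase : ∃ y ∈ P, μ y ≠ 0 ∧ y ≠ v
  · have := hLa hcase
    show v 0 + lam * v 1 < (a 0 + c 0) + lam * (a 1 + c 1)
    nlinarith
  · push_neg at hcase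
    have hav : a = v := by
      rw [← hma]
      have : ∀ y ∈ P, μ y • y = μ y • v := by
        intro y hy
        by_cases h : μ y = 0
        · rw [h, zero_smul, zero_smul]
        · rw [hcase y hy h]
      rw [Finset.sum_congr rfl this, ← Finset.sum_smul, hμ1, one_smul]
    have hcne : c ≠ 0 := fun h => hwv (by simp [h, hav])
    have hcpos : 0 < c 0 ∨ 0 < c 1 := by
      by_contra h
      push_neg at h
      exact hcne (funext fun i => by
        fin_cases i <;> simp <;>
          [exact le_antisymm h.1 hc0; exact le_antisymm h.2 hc1])
    show v 0 + lam * v 1 < (a 0 + c 0) + lam * (a 1 + c 1)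
    rw [hav]
    rcases hcpos with h | h <;> nlinarith

/-- every extreme point `v` of `V = conv(F(X)) + ℝ²₊` is the unique minimizer of
`w ↦ w₁ + λ w₂` over `V` for some `λ ≥ 0`; consequently every set `S ⊆ X` containing, for each
`λ ≥ 0`, a minimizer of `F(·)₁ + λ F(·)₂` over `X` satisfies `extremePoints V ⊆ F(S)`, and
in particular `|S|` is at least the number of extreme points of `V`. -/
theorem extreme_points_strictly_exposed_and_lower_bound
    {α : Type*} (X : Finset α) (hX : X.Nonempty) (F : α → (Fin 2 → ℝ)) :
    (∀ v ∈ (objSpacePolytope (F '' (X : Set α))).extremePoints ℝ,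
      ∃ lam : ℝ, 0 ≤ lam ∧
        ∀ w ∈ objSpacePolytope (F '' (X : Set α)), w ≠ v →
          v 0 + lam * v 1 < w 0 + lam * w 1) ∧
    (∀ S : Finset α, S ⊆ X →
      (∀ lam : ℝ, 0 ≤ lam →
        ∃ x ∈ S, ∀ y ∈ X, F x 0 + lam * F x 1 ≤ F y 0 + lam * F y 1) →
      ((objSpacePolytope (F '' (X : Set α))).extremePoints ℝ ⊆ F '' (S : Set α) ∧
        ((objSpacePolytope (F '' (X : Set α))).extremePoints ℝ).ncard ≤ S.card)) := by
  classical
  set P : Finset (Fin 2 → ℝ) := X.image F with hP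
  have hPcoe : F '' (X : Set α) = (↑P : Set (Fin 2 → ℝ)) := by
    rw [hP, Finset.coe_image]
  rw [hPcoe]
  -- every extreme point lies in P
  have hvP : ∀ v ∈ (objSpacePolytope (↑P : Set (Fin 2 → ℝ))).extremePoints ℝ, v ∈ P := by
    intro v hv
    obtain ⟨a, ha, c, hc, hvac⟩ := hv.1
    have hav : a = v := objAux.extreme_add hv (objAux.convexHull_subset _ ha) hc hvac.symm
    have hvconv : v ∈ convexHull ℝ (↑P : Set (Fin 2 → ℝ)) := hav ▸ ha
    have hext : v ∈ (convexHull ℝ (↑P : Set (Fin 2 → ℝ))).extremePoints ℝ := by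
      refine ⟨hvconv, fun x₁ hx₁ x₂ hx₂ hseg => ?_⟩
      exact hv.2 (objAux.convexHull_subset _ hx₁) (objAux.convexHull_subset _ hx₂) hseg
    exact extremePoints_convexHull_subset hext
  -- statement 1 with lam > 0
  have hmain : ∀ v ∈ (objSpacePolytope (↑P : Set (Fin 2 → ℝ))).extremePoints ℝ,
      ∃ lam : ℝ, 0 < lam ∧
        ∀ w ∈ objSpacePolytope (↑P : Set (Fin 2 → ℝ)), w ≠ v →
          v 0 + lam * v 1 < w 0 + lam * w 1 := by
    intro v hv
    obtain ⟨lam, hlam, hstrict⟩ := objAux.exists_lam_finset P hv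
    exact ⟨lam, hlam, objAux.strict_min P hlam hstrict⟩
  constructor
  · intro v hv
    obtain ⟨lam, hlam, h⟩ := hmain v hv
    exact ⟨lam, hlam.le, h⟩
  · intro S hS hopt
    have hsub : (objSpacePolytope (↑P : Set (Fin 2 → ℝ))).extremePoints ℝ ⊆
        F '' (S : Set α) := by
      intro v hv
      obtain ⟨lam, hlam, hstrict⟩ := hmain v hv
      obtain ⟨x, hxS, hxmin⟩ := hopt lam hlam.le
      -- v ∈ P, so v = F x₀ for some x₀ ∈ X
      obtain ⟨x₀, hx₀X, hx₀v⟩ := Finset.mem_image.1 (hvP v hv)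
      have hFxV : F x ∈ objSpacePolytope (↑P : Set (Fin 2 → ℝ)) := by
        apply objAux.subset
        exact_mod_cast Finset.mem_image_of_mem F (hS hxS)
      have hFxv : F x = v := by
        by_contra hne
        have h1 := hstrict (F x) hFxV hne
        have h2 := hxmin x₀ hx₀X
        rw [hx₀v] at h2
        linarith
      exact ⟨x, hxS, hFxv⟩
    refine ⟨hsub, ?_⟩
    have hfin : (F '' (S : Set α)).Finite := (S.finite_toSet).image F
    calc ((objSpacePolytope (↑P : Set (Fin 2 → ℝ))).extremePoints ℝ).ncard
        ≤ (F '' (S : Set α)).ncard := Set.ncard_le_ncard hsub hfin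
      _ = (S.image F).card := by rw [← Finset.coe_image, Set.ncard_coe_finset]
      _ ≤ S.card := Finset.card_image_le
end

section
/- Let n ≥ 1, let X ⊆ {0,1}ⁿ be finite and nonempty, and let ĉ ∈ ℝⁿ with ĉ ≥ 0 componentwise. Define F : X → ℝ² by F(x) = (ĉᵀx, Σᵢ xᵢ) (nominal cost and ℓ₁-norm), and let V = conv(F(X)) + ℝ²₊. Then the number of extreme points of V is at most n. -/
open Pointwise

/-- for `X ⊆ {0,1}ⁿ`, `ĉ ≥ 0`, and `F(x) = (ĉᵀx, Σᵢ xᵢ)`, the set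
`V = conv(F(X)) + ℝ²₊` has at most `n` extreme points. -/
theorem constant_growth_extreme_points_le_n
    {n : ℕ} (hn : 1 ≤ n) (X : Finset (Fin n → ℝ)) (hXne : X.Nonempty)
    (hX01 : ∀ x ∈ X, ∀ i, x i = 0 ∨ x i = 1)
    (chat : Fin n → ℝ) (hchat : ∀ i, 0 ≤ chat i) :
    ((convexHull ℝ ((fun x => ![∑ i, chat i * x i, ∑ i, x i]) '' (X : Set (Fin n → ℝ))) +
        {v : Fin 2 → ℝ | 0 ≤ v}).extremePoints ℝ).ncard ≤ n := by
  classical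
  set F : (Fin n → ℝ) → (Fin 2 → ℝ) := fun x => ![∑ i, chat i * x i, ∑ i, x i] with hF
  set S : Set (Fin 2 → ℝ) := F '' (X : Set (Fin n → ℝ)) with hS
  set K : Set (Fin 2 → ℝ) := {v : Fin 2 → ℝ | 0 ≤ v} with hK
  set V : Set (Fin 2 → ℝ) := convexHull ℝ S + K with hV
  set E := V.extremePoints ℝ with hE
  have hVK : ∀ w ∈ V, ∀ k ∈ K, w + k ∈ V := by
    rintro w hw k hk
    rw [hV, Set.mem_add] at hw
    obtain ⟨c, hc, k', hk', rfl⟩ := hw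
    refine Set.mem_add.2 ⟨c, hc, k' + k, ?_, (add_assoc _ _ _).symm⟩
    intro i
    exact add_nonneg (hk' i) (hk i)
  have hSV : convexHull ℝ S ⊆ V := fun c hc =>
    Set.mem_add.2 ⟨c, hc, 0, fun i => le_rfl, add_zero c⟩
  -- key lemma: if v is extreme and u ∈ V with v - u ≥ 0, then u = v
  have key : ∀ v ∈ E, ∀ u ∈ V, v - u ∈ K → u = v := by
    intro v hv u hu hk
    obtain ⟨hv1, hv2⟩ := mem_extremePoints.1 hv
    have h2 : v + (v - u) ∈ V := hVK v hv1 _ hk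
    have hseg : v ∈ openSegment ℝ u (v + (v - u)) := by
      refine ⟨1/2, 1/2, by norm_num, by norm_num, by norm_num, ?_⟩
      funext i
      simp only [Pi.add_apply, Pi.sub_apply, Pi.smul_apply, smul_eq_mul]
      ring
    exact (hv2 u hu (v + (v - u)) h2 hseg).1
  -- extreme points lie in S
  have hES : E ⊆ S := by
    intro v hv
    obtain ⟨hvV0, hv2⟩ := mem_extremePoints.1 hv
    have hvV := hvV0
    rw [hV, Set.mem_add] at hvV
    obtain ⟨c, hc, k, hk, hck⟩ := hvV
    have hcv : c = v := by
      refine key v hv c (hSV hc) ?_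
      have : v - c = k := by rw [← hck]; ring
      rw [this]; exact hk
    have hvch : v ∈ convexHull ℝ S := hcv ▸ hc
    have hvext : v ∈ (convexHull ℝ S).extremePoints ℝ :=
      mem_extremePoints.2 ⟨hvch, fun x₁ h₁ x₂ h₂ hseg => hv2 x₁ (hSV h₁) x₂ (hSV h₂) hseg⟩
    exact extremePoints_convexHull_subset hvext
  -- facts about elements of S
  have hSfacts : ∀ v ∈ S, (0 ≤ v 0 ∧ ∃ k : ℕ, k ≤ n ∧ v 1 = (k : ℝ)) := by
    rintro v ⟨x, hx, rfl⟩
    have hx01 := hX01 x hx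
    constructor
    · have : (0:ℝ) ≤ ∑ i, chat i * x i := by
        apply Finset.sum_nonneg
        intro i _
        rcases hx01 i with h | h <;> simp [h, hchat i, mul_nonneg (hchat i)]
      simpa [hF] using this
    · refine ⟨(Finset.univ.filter (fun i => x i = 1)).card, ?_, ?_⟩
      · exact le_trans (Finset.card_filter_le _ _) (by simp)
      · have h1 : ∑ i ∈ Finset.univ.filter (fun i => x i = 1), x i
            = ((Finset.univ.filter (fun i => x i = 1)).card : ℝ) := by
          rw [Finset.sum_congr rfl (fun i hi => (Finset.mem_filter.1 hi).2)]
          simp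
        have h2 : ∑ i ∈ Finset.univ.filter (fun i => ¬ x i = 1), x i = 0 :=
          Finset.sum_eq_zero fun i hi =>
            (hx01 i).resolve_right (Finset.mem_filter.1 hi).2
        have : ∑ i, x i = ((Finset.univ.filter (fun i => x i = 1)).card : ℝ) := by
          rw [← Finset.sum_filter_add_sum_filter_not Finset.univ (fun i => x i = 1), h1, h2,
            add_zero]
        simpa [hF] using this
  -- injectivity of second coordinate on E
  have hinj : Set.InjOn (fun v : Fin 2 → ℝ => v 1) E := by
    intro u hu v hv huv
    simp only at huv
    have hsub : ∀ a b : Fin 2 → ℝ, a ∈ E → b ∈ E → a 1 = b 1 → a 0 ≤ b 0 → a = b := by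
      intro a b ha hb h1 h0
      refine key b hb a ha.1 ?_
      intro i
      fin_cases i
      · simpa using sub_nonneg.2 h0
      · simp [h1]
    rcases le_total (u 0) (v 0) with h | h
    · exact hsub u v hu hv huv h
    · exact (hsub v u hv hu huv.symm h).symm
  by_cases hzero : ∃ e ∈ E, e 1 = 0
  · -- then E is a singleton
    obtain ⟨e, he, he1⟩ := hzero
    have heS := hES he
    have he0 : e 0 = 0 := by
      obtain ⟨x, hx, hxe⟩ := heS
      have hx01 := hX01 x hx
      have hxnn : ∀ i, 0 ≤ x i := fun i => by rcases hx01 i with h | h <;> simp [h]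
      have hsum : ∑ i, x i = 0 := by
        have : e 1 = ∑ i, x i := by rw [← hxe]; simp [hF]
        linarith [this ▸ he1]
      have hxz : ∀ i ∈ Finset.univ, x i = 0 :=
        (Finset.sum_eq_zero_iff_of_nonneg (fun i _ => hxnn i)).1 hsum
      rw [← hxe]
      show ∑ i, chat i * x i = 0
      exact Finset.sum_eq_zero (fun i _ => by rw [hxz i (Finset.mem_univ i), mul_zero])
    have hEsub : E ⊆ {e} := by
      intro e' he'
      have hfacts := hSfacts e' (hES he')
      have : e = e' := by
        refine key e' he' e he.1 ?_
        intro i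
        fin_cases i
        · show (0:ℝ) ≤ e' 0 - e 0
          rw [he0]
          simpa using hfacts.1
        · show (0:ℝ) ≤ e' 1 - e 1
          rw [he1]
          obtain ⟨k, _, hk⟩ := hfacts.2
          rw [hk]
          simp
      simp [← this]
    calc E.ncard ≤ ({e} : Set (Fin 2 → ℝ)).ncard :=
          Set.ncard_le_ncard hEsub (Set.finite_singleton e)
      _ = 1 := Set.ncard_singleton e
      _ ≤ n := hn
  · push_neg at hzero
    set T : Finset ℝ := (Finset.Icc 1 n).image (Nat.cast : ℕ → ℝ) with hT
    have himg : (fun v : Fin 2 → ℝ => v 1) '' E ⊆ (T : Set ℝ) := by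
      rintro y ⟨e, he, rfl⟩
      obtain ⟨_, k, hkn, hk⟩ := hSfacts e (hES he)
      have hkpos : 1 ≤ k := by
        rcases Nat.eq_zero_or_pos k with h | h
        · exact absurd (by rw [hk, h]; simp) (hzero e he)
        · exact h
      simp only [hT, Finset.coe_image, Set.mem_image, Finset.mem_coe, Finset.mem_Icc]
      exact ⟨k, ⟨hkpos, hkn⟩, hk.symm⟩
    calc E.ncard = ((fun v : Fin 2 → ℝ => v 1) '' E).ncard :=
          (Set.ncard_image_of_injOn hinj).symm
      _ ≤ (T : Set ℝ).ncard := Set.ncard_le_ncard himg T.finite_toSet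
      _ = T.card := Set.ncard_coe_finset T
      _ ≤ (Finset.Icc 1 n).card := Finset.card_image_le
      _ ≤ n := by simp
end

section
/- Let n ≥ 1, let X ⊆ {0,1}ⁿ be finite and nonempty, and let ĉ ∈ ℝⁿ with ĉ ≥ 0 componentwise. Consider the variable-sized min-max robust problem with constant growth, whose objective for uncertainty size λ ≥ 0 is x ↦ ĉᵀx + λ·Σᵢ xᵢ. Then there exists a set S ⊆ X with |S| ≤ n such that for every λ ≥ 0 some x ∈ S minimizes ĉᵀx + λ·Σᵢ xᵢ over X. -/
/-- the variable-sized min-max robust problem with constant growth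
(objective `ĉᵀx + λ·Σᵢ xᵢ`) admits a solution set `S ⊆ X` with `|S| ≤ n`
containing an optimal solution for every uncertainty size `λ ≥ 0`. -/
theorem variable_sized_constant_growth_solution_set
    {n : ℕ} (hn : 1 ≤ n) (X : Finset (Fin n → ℝ)) (hXne : X.Nonempty)
    (hX01 : ∀ x ∈ X, ∀ i, x i = 0 ∨ x i = 1)
    (chat : Fin n → ℝ) (hchat : ∀ i, 0 ≤ chat i) :
    ∃ S : Finset (Fin n → ℝ), S ⊆ X ∧ S.card ≤ n ∧
      ∀ lam : ℝ, 0 ≤ lam → ∃ x ∈ S, ∀ y ∈ X,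
        (∑ i, chat i * x i) + lam * ∑ i, x i ≤ (∑ i, chat i * y i) + lam * ∑ i, y i := by
  classical
  by_cases h0 : (fun _ => (0:ℝ)) ∈ X
  · refine ⟨{fun _ => 0}, by simpa using h0, by simpa using hn, ?_⟩
    intro lam hlam
    refine ⟨fun _ => 0, Finset.mem_singleton_self _, ?_⟩
    intro y hy
    have h1 : 0 ≤ ∑ i, chat i * y i := Finset.sum_nonneg fun i _ =>
      mul_nonneg (hchat i) (by rcases hX01 y hy i with h | h <;> simp [h])
    have h2 : 0 ≤ ∑ i, y i := Finset.sum_nonneg fun i _ => by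
      rcases hX01 y hy i with h | h <;> simp [h]
    simp only [mul_zero, Finset.sum_const_zero, add_zero]
    have := mul_nonneg hlam h2
    linarith
  · set sz : (Fin n → ℝ) → ℝ := fun x => ∑ i, x i with hszdef
    set T := X.image sz with hT
    have hrep : ∀ k ∈ T, ∃ x ∈ X.filter (fun x => sz x = k),
        ∀ y ∈ X.filter (fun x => sz x = k), ∑ i, chat i * x i ≤ ∑ i, chat i * y i := by
      intro k hk
      obtain ⟨x, hx, hxk⟩ := Finset.mem_image.mp hk
      exact Finset.exists_min_image (X.filter (fun x => sz x = k)) (fun x => ∑ i, chat i * x i)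
        ⟨x, Finset.mem_filter.mpr ⟨hx, hxk⟩⟩
    choose rep hrepmem hrepmin using hrep
    set S := T.attach.image (fun k => rep k.1 k.2) with hS
    have hSX : S ⊆ X := by
      intro x hx
      obtain ⟨k, _, rfl⟩ := Finset.mem_image.mp hx
      exact (Finset.mem_filter.mp (hrepmem k.1 k.2)).1
    -- card bound : T injects into Icc 1 n via natural sizes
    have hTsub : T ⊆ (Finset.Icc 1 n).image ((↑) : ℕ → ℝ) := by
      intro k hk
      obtain ⟨x, hx, rfl⟩ := Finset.mem_image.mp hk
      set A := Finset.univ.filter (fun i => x i = 1) with hA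
      have hAne : A.Nonempty := by
        by_contra hA0
        apply h0
        have hAll : ∀ i, x i = 0 := by
          intro i
          rcases hX01 x hx i with h | h
          · exact h
          · exact absurd ⟨i, Finset.mem_filter.mpr ⟨Finset.mem_univ i, h⟩⟩ hA0
        have : x = fun _ => (0:ℝ) := funext hAll
        rwa [← this]
      have hcard : sz x = (A.card : ℝ) := by
        have : ∀ i ∈ Finset.univ, x i = if x i = 1 then (1:ℝ) else 0 := by
          intro i _
          rcases hX01 x hx i with h | h <;> simp [h]
        calc sz x = ∑ i, (if x i = 1 then (1:ℝ) else 0) := Finset.sum_congr rfl this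
          _ = (A.card : ℝ) := by rw [Finset.sum_boole]
      refine Finset.mem_image.mpr ⟨A.card, Finset.mem_Icc.mpr ⟨hAne.card_pos, ?_⟩, hcard.symm⟩
      simpa using Finset.card_le_card (Finset.subset_univ A)
    have hcardS : S.card ≤ n := by
      calc S.card ≤ T.attach.card := Finset.card_image_le
        _ = T.card := Finset.card_attach
        _ ≤ ((Finset.Icc 1 n).image ((↑) : ℕ → ℝ)).card := Finset.card_le_card hTsub
        _ ≤ (Finset.Icc 1 n).card := Finset.card_image_le
        _ = n := by simp
    refine ⟨S, hSX, hcardS, ?_⟩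
    intro lam hlam
    have hSne : S.Nonempty := by
      obtain ⟨x, hx⟩ := hXne
      have hk : sz x ∈ T := Finset.mem_image.mpr ⟨x, hx, rfl⟩
      exact ⟨rep (sz x) hk, Finset.mem_image.mpr ⟨⟨sz x, hk⟩, Finset.mem_attach _ _, rfl⟩⟩
    obtain ⟨x, hxS, hxmin⟩ := Finset.exists_min_image S
      (fun x => (∑ i, chat i * x i) + lam * ∑ i, x i) hSne
    refine ⟨x, hxS, ?_⟩
    intro y hy
    have hk : sz y ∈ T := Finset.mem_image.mpr ⟨y, hy, rfl⟩
    have hrS : rep (sz y) hk ∈ S :=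
      Finset.mem_image.mpr ⟨⟨sz y, hk⟩, Finset.mem_attach _ _, rfl⟩
    have h1 := hxmin _ hrS
    have hsz : sz (rep (sz y) hk) = sz y := (Finset.mem_filter.mp (hrepmem (sz y) hk)).2
    have h2 : (∑ i, chat i * rep (sz y) hk i) ≤ ∑ i, chat i * y i :=
      hrepmin (sz y) hk y (Finset.mem_filter.mpr ⟨hy, rfl⟩)
    have hsz' : (∑ i, rep (sz y) hk i) = ∑ i, y i := hsz
    calc (∑ i, chat i * x i) + lam * ∑ i, x i
        ≤ (∑ i, chat i * rep (sz y) hk i) + lam * ∑ i, rep (sz y) hk i := h1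
      _ = (∑ i, chat i * rep (sz y) hk i) + lam * ∑ i, y i := by rw [hsz']
      _ ≤ (∑ i, chat i * y i) + lam * ∑ i, y i := by linarith
end

section
/- Let G be a simple graph on a finite vertex set of cardinality N, let s and t be vertices with at least one s–t path, and let c be a nonnegative real cost on the edges of G. For an s–t path P write c(P) for the sum of the costs of its edges and |P| for its number of edges. Then there exists a set S of s–t paths with |S| ≤ N such that for every λ ≥ 0 some P ∈ S minimizes c(P) + λ·|P| over all s–t paths in G. -/
/-- in a finite simple graph on `N` vertices with nonnegative edge costs,
the variable-sized robust shortest path problem with constant growth (objective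
`c(P) + λ·|P|`) admits a solution set of at most `N` s–t paths containing, for every
`λ ≥ 0`, a path minimizing `c(P) + λ·|P|` over all s–t paths. -/
theorem variable_sized_robust_shortest_path_constant_growth
    {V : Type*} [Fintype V] (N : ℕ) (hN : Fintype.card V = N)
    (G : SimpleGraph V) (s t : V)
    (hpath : ∃ p : G.Walk s t, p.IsPath)
    (c : Sym2 V → ℝ) (hc : ∀ e ∈ G.edgeSet, 0 ≤ c e) :
    ∃ S : Set (G.Walk s t), S.Finite ∧ S.ncard ≤ N ∧ (∀ p ∈ S, p.IsPath) ∧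
      ∀ lam : ℝ, 0 ≤ lam → ∃ p ∈ S, ∀ q : G.Walk s t, q.IsPath →
        (p.edges.map c).sum + lam * (p.length : ℝ) ≤
          (q.edges.map c).sum + lam * (q.length : ℝ) := by
  classical
  obtain ⟨p0, hp0⟩ := hpath
  set cost : G.Walk s t → ℝ := fun p => (p.edges.map c).sum with hcost
  -- the finset of all s-t paths
  set F : Finset (G.Walk s t) :=
    (G.finsetWalkLengthLT N s t).filter (fun p => p.IsPath) with hF
  have hmemF : ∀ p : G.Walk s t, p ∈ F ↔ p.IsPath := by
    intro p
    constructor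
    · intro hp; exact (Finset.mem_filter.mp hp).2
    · intro hp
      refine Finset.mem_filter.mpr ⟨?_, hp⟩
      rw [SimpleGraph.mem_finsetWalkLengthLT_iff]
      simpa [hN] using hp.length_lt
  -- for each length k, the paths of length k
  set Fk : ℕ → Finset (G.Walk s t) := fun k => F.filter (fun p => p.length = k) with hFk
  -- pick a min-cost path of each achieved length
  have hpick : ∀ k, (Fk k).Nonempty → ∃ p ∈ Fk k, ∀ q ∈ Fk k, cost p ≤ cost q := by
    intro k hk
    exact Finset.exists_min_image (Fk k) cost hk
  have : Inhabited (G.Walk s t) := ⟨p0⟩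
  choose! pick hpick1 hpick2 using hpick
  set S : Set (G.Walk s t) := (fun k => pick k) '' {k | (Fk k).Nonempty} with hS
  have hSsub : {k | (Fk k).Nonempty} ⊆ Set.Iio N := by
    intro k hk
    obtain ⟨p, hp⟩ := hk
    have hp' := Finset.mem_filter.mp hp
    have : p.IsPath := (hmemF p).mp hp'.1
    have := this.length_lt
    simp only [Set.mem_Iio]
    omega
  have hfinIio : (Set.Iio N : Set ℕ).Finite := Set.finite_Iio N
  have hfinK : {k | (Fk k).Nonempty}.Finite := hfinIio.subset hSsub
  have hSfin : S.Finite := hfinK.image _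
  refine ⟨S, hSfin, ?_, ?_, ?_⟩
  · calc S.ncard ≤ {k | (Fk k).Nonempty}.ncard := Set.ncard_image_le hfinK
      _ ≤ (Set.Iio N : Set ℕ).ncard := Set.ncard_le_ncard hSsub hfinIio
      _ = N := by
          rw [show (Set.Iio N : Set ℕ) = ↑(Finset.Iio N) by simp, Set.ncard_coe_finset]
          simp
  · rintro p ⟨k, hk, rfl⟩
    have := Finset.mem_filter.mp (hpick1 k hk)
    exact (hmemF _).mp this.1
  · intro lam hlam
    -- global minimizer over F
    have hFne : F.Nonempty := ⟨p0, (hmemF p0).mpr hp0⟩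
    obtain ⟨q0, hq0F, hq0min⟩ :=
      Finset.exists_min_image F (fun p => cost p + lam * (p.length : ℝ)) hFne
    set k := q0.length with hk
    have hkne : (Fk k).Nonempty := ⟨q0, Finset.mem_filter.mpr ⟨hq0F, rfl⟩⟩
    refine ⟨pick k, ⟨k, hkne, rfl⟩, ?_⟩
    intro q hq
    have hpk := hpick1 k hkne
    have hpklen : (pick k).length = k := (Finset.mem_filter.mp hpk).2
    have h1 : cost (pick k) ≤ cost q0 :=
      hpick2 k hkne q0 (Finset.mem_filter.mpr ⟨hq0F, rfl⟩)
    have h2 : cost q0 + lam * (q0.length : ℝ) ≤ cost q + lam * (q.length : ℝ) :=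
      hq0min q ((hmemF q).mpr hq)
    have : cost (pick k) + lam * ((pick k).length : ℝ)
        ≤ cost q0 + lam * (q0.length : ℝ) := by
      rw [hpklen, hk]
      linarith
    exact this.trans h2
end

section
/- Let A and B be finite nonempty subsets of ℝ², and let A + B = {a + b : a ∈ A, b ∈ B} be their Minkowski sum. Then the number of extreme points of conv(A + B) + ℝ²₊ is at most (number of extreme points of conv(A) + ℝ²₊) + (number of extreme points of conv(B) + ℝ²₊) − 1. (This is the key step for series compositions in the bound on the number of efficient extreme paths in series-parallel graphs.) -/
open Pointwise

namespace MinkowskiAux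

/-- the dot product with weight `w` as a linear map -/
noncomputable def dotL (w : Fin 2 → ℝ) : (Fin 2 → ℝ) →ₗ[ℝ] ℝ :=
  w 0 • (LinearMap.proj 0 : (Fin 2 → ℝ) →ₗ[ℝ] ℝ) + w 1 • (LinearMap.proj 1)

lemma dotL_apply (w x : Fin 2 → ℝ) : dotL w x = w 0 * x 0 + w 1 * x 1 := by
  simp [dotL]

lemma convex_cone : Convex ℝ {v : Fin 2 → ℝ | 0 ≤ v} := by
  intro x hx y hy a b ha hb hab
  intro i
  simp only [Pi.add_apply, Pi.smul_apply, smul_eq_mul]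
  have := hx i; have := hy i
  simp only [Pi.zero_apply] at *
  nlinarith

lemma convex_P (S : Set (Fin 2 → ℝ)) :
    Convex ℝ (convexHull ℝ S + {v : Fin 2 → ℝ | 0 ≤ v}) :=
  (convex_convexHull ℝ S).add convex_cone

lemma convexHull_subset_P (S : Set (Fin 2 → ℝ)) :
    convexHull ℝ S ⊆ convexHull ℝ S + {v : Fin 2 → ℝ | 0 ≤ v} := by
  intro x hx
  exact ⟨x, hx, 0, show (0 : Fin 2 → ℝ) ≤ 0 from le_rfl, add_zero x⟩

/-- extreme points of a subset -/
lemma extremePoints_mono {P Q : Set (Fin 2 → ℝ)} {v : Fin 2 → ℝ}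
    (hQP : Q ⊆ P) (hv : v ∈ P.extremePoints ℝ) (hvQ : v ∈ Q) :
    v ∈ Q.extremePoints ℝ :=
  ⟨hvQ, fun x₁ h₁ x₂ h₂ hseg => hv.2 (hQP h₁) (hQP h₂) hseg⟩

/-- every extreme point of conv S + cone lies in S -/
lemma extreme_mem_self {S : Set (Fin 2 → ℝ)} {v : Fin 2 → ℝ}
    (hv : v ∈ (convexHull ℝ S + {v : Fin 2 → ℝ | 0 ≤ v}).extremePoints ℝ) : v ∈ S := by
  obtain ⟨c, hc, d, hd, hcd'⟩ := hv.1
  have hcd : c + d = v := hcd'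
  have hcP : c ∈ convexHull ℝ S + {v : Fin 2 → ℝ | 0 ≤ v} := convexHull_subset_P S hc
  have hc2P : c + (d + d) ∈ convexHull ℝ S + {v : Fin 2 → ℝ | 0 ≤ v} :=
    ⟨c, hc, d + d, show (0 : Fin 2 → ℝ) ≤ d + d from add_nonneg hd hd, rfl⟩
  have hd0 : d = 0 := by
    have hseg : v ∈ openSegment ℝ c (c + (d + d)) := by
      refine ⟨1/2, 1/2, by norm_num, by norm_num, by norm_num, ?_⟩
      rw [← hcd]; module
    have h1 := ((mem_extremePoints.mp hv).2 _ hcP _ hc2P hseg).1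
    have h2 := ((mem_extremePoints.mp hv).2 _ hcP _ hc2P hseg).2
    have h3 : c + (d + d) = c := by rw [h2, h1]
    have h4 : d + d = 0 := by
      have := add_left_cancel (h3.trans (add_zero c).symm); exact this
    funext i
    have h5 := congrFun h4 i
    simp only [Pi.add_apply, Pi.zero_apply] at h5 ⊢
    linarith
  rw [← hcd, hd0, add_zero]
  have hvc : c ∈ (convexHull ℝ S).extremePoints ℝ := by
    refine extremePoints_mono (convexHull_subset_P S) ?_ hc
    rw [← hcd, hd0, add_zero] at hv; exact hv
  exact extremePoints_convexHull_subset hvc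

/-- every extreme point of conv S + cone is strictly exposed by a positive functional -/
lemma exists_weight {S : Set (Fin 2 → ℝ)} (hS : S.Finite) {v : Fin 2 → ℝ}
    (hv : v ∈ (convexHull ℝ S + {v : Fin 2 → ℝ | 0 ≤ v}).extremePoints ℝ) :
    ∃ w : Fin 2 → ℝ, 0 < w 0 ∧ 0 < w 1 ∧ ∀ u ∈ S, u ≠ v → dotL w v < dotL w u := by
  classical
  set C : Set (Fin 2 → ℝ) := {v : Fin 2 → ℝ | 0 ≤ v} with hC
  set P : Set (Fin 2 → ℝ) := convexHull ℝ S + C with hP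
  set T : Set (Fin 2 → ℝ) := (S \ {v}) ∪ {v + Pi.single 0 1, v + Pi.single 1 1} with hT
  have hTfin : T.Finite := (hS.sdiff).union ((Set.finite_singleton _).insert _)
  have hsingle_mem : ∀ i : Fin 2, (0 : Fin 2 → ℝ) ≤ Pi.single i 1 := by
    intro i j
    simp only [Pi.zero_apply]
    rcases eq_or_ne j i with rfl | h
    · simp
    · simp [Pi.single_apply, h]
  have hsingle_ne : ∀ i : Fin 2, v + Pi.single i 1 ≠ v := by
    intro i h
    have := congrFun h i
    simp [Pi.single_apply] at this
  have hTP : T ⊆ P := by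
    intro x hx
    rcases hx with ⟨hxS, _⟩ | hx
    · exact convexHull_subset_P S (subset_convexHull ℝ S hxS)
    · obtain ⟨c, hc, d, hd, hcd'⟩ := hv.1
      have hcd : c + d = v := hcd'
      have : ∀ i : Fin 2, v + Pi.single i 1 ∈ P := by
        intro i
        refine ⟨c, hc, d + Pi.single i 1, add_nonneg hd (hsingle_mem i), ?_⟩
        rw [← hcd]; abel
      rcases hx with rfl | hx
      · exact this 0
      · rw [Set.mem_singleton_iff] at hx; rw [hx]; exact this 1
  have hvT : v ∉ T := by
    intro h
    rcases h with ⟨_, hne⟩ | h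
    · exact hne rfl
    · rcases h with h | h
      · exact hsingle_ne 0 h.symm
      · rw [Set.mem_singleton_iff] at h; exact hsingle_ne 1 h.symm
  have hvnot : v ∉ convexHull ℝ T := by
    intro hmem
    have hsub : convexHull ℝ T ⊆ P := convexHull_min hTP (convex_P S)
    have : v ∈ (convexHull ℝ T).extremePoints ℝ := extremePoints_mono hsub hv hmem
    exact hvT (extremePoints_convexHull_subset this)
  obtain ⟨f, u, hfv, hfb⟩ :=
    geometric_hahn_banach_point_closed (convex_convexHull ℝ T) (hTfin.isClosed_convexHull ℝ) hvnot
  refine ⟨fun i => f (Pi.single i 1), ?_, ?_, ?_⟩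
  · have h0 : v + Pi.single 0 1 ∈ convexHull ℝ T :=
      subset_convexHull ℝ T (by right; left; rfl)
    have := hfb _ h0
    simp only [map_add] at this
    linarith
  · have h1 : v + Pi.single 1 1 ∈ convexHull ℝ T :=
      subset_convexHull ℝ T (by right; right; rfl)
    have := hfb _ h1
    simp only [map_add] at this
    linarith
  · intro x hx hne
    have hxT : x ∈ convexHull ℝ T := subset_convexHull ℝ T (Or.inl ⟨hx, hne⟩)
    have hkey : ∀ y : Fin 2 → ℝ, dotL (fun i => f (Pi.single i 1)) y = f y := by
      intro y
      have hy : y = y 0 • (Pi.single 0 1 : Fin 2 → ℝ) + y 1 • (Pi.single 1 1 : Fin 2 → ℝ) := by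
        funext j
        fin_cases j <;> simp [Pi.single_apply]
      rw [dotL_apply]
      calc f (Pi.single (0 : Fin 2) 1) * y 0 + f (Pi.single 1 1) * y 1
            = f (y 0 • (Pi.single 0 1 : Fin 2 → ℝ) + y 1 • (Pi.single 1 1 : Fin 2 → ℝ)) := by
              simp only [map_add, map_smul, smul_eq_mul]; ring
        _ = f y := by rw [← hy]
    rw [hkey, hkey]
    exact lt_trans hfv (hfb _ hxT)

/-- a strict minimizer of a positive functional over S is an extreme point of conv S + cone -/
lemma strictmin_extreme {S : Set (Fin 2 → ℝ)} (hS : S.Finite) {a w : Fin 2 → ℝ}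
    (hw0 : 0 < w 0) (hw1 : 0 < w 1) (ha : a ∈ S)
    (hmin : ∀ x ∈ S, x ≠ a → dotL w a < dotL w x) :
    a ∈ (convexHull ℝ S + {v : Fin 2 → ℝ | 0 ≤ v}).extremePoints ℝ := by
  classical
  have hhalf : ∀ c ∈ convexHull ℝ S, dotL w a ≤ dotL w c := by
    intro c hc
    have hsub : convexHull ℝ S ⊆ {x | dotL w a ≤ dotL w x} := by
      apply convexHull_min
      · intro x hx
        simp only [Set.mem_setOf_eq]
        rcases eq_or_ne x a with rfl | h
        · exact le_rfl
        · exact (hmin x hx h).le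
      · intro x hx y hy s t hs ht hst
        simp only [Set.mem_setOf_eq, map_add, map_smul, smul_eq_mul] at *
        have hid : s * dotL w a + t * dotL w a = dotL w a := by
          rw [← add_mul, hst, one_mul]
        linarith [mul_le_mul_of_nonneg_left hx hs, mul_le_mul_of_nonneg_left hy ht]
    exact hsub hc
  have hdpos : ∀ d : Fin 2 → ℝ, 0 ≤ d → 0 ≤ dotL w d := by
    intro d hd
    rw [dotL_apply]
    have := hd 0; have := hd 1
    simp only [Pi.zero_apply] at *
    nlinarith
  have hlow : ∀ y ∈ convexHull ℝ S + {v : Fin 2 → ℝ | 0 ≤ v}, dotL w a ≤ dotL w y := by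
    rintro y ⟨c, hc, d, hd, rfl⟩
    have h1 := hhalf c hc
    have h2 := hdpos d hd
    simp only [map_add]
    linarith
  -- points of P achieving the minimum value must equal a
  have heq : ∀ y ∈ convexHull ℝ S + {v : Fin 2 → ℝ | 0 ≤ v}, dotL w y = dotL w a → y = a := by
    rintro y ⟨c, hc, d, hd, hcd'⟩ hy
    have hcd : c + d = y := hcd'
    rw [← hcd] at hy ⊢
    have h1 := hhalf c hc
    have h2 := hdpos d hd
    have hyv : dotL w (c + d) = dotL w c + dotL w d := by simp
    have hc_eq : dotL w c = dotL w a := by rw [hyv] at hy; linarith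
    have hd_eq : dotL w d = 0 := by rw [hyv] at hy; linarith
    have hd0 : d = 0 := by
      rw [dotL_apply] at hd_eq
      have h0 := hd 0; have h1' := hd 1
      simp only [Pi.zero_apply] at h0 h1'
      have hd00 : d 0 = 0 := by nlinarith
      have hd11 : d 1 = 0 := by nlinarith
      funext j
      fin_cases j
      · exact hd00
      · exact hd11
    rw [hd0, add_zero]
    -- show c = a using finite convex combination
    rw [hS.convexHull_eq] at hc
    obtain ⟨wt, hwt0, hwt1, hwtc⟩ := hc
    have hcmass : c = ∑ y ∈ hS.toFinset, wt y • y := by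
      rw [← hwtc, Finset.centerMass_eq_of_sum_1 _ _ hwt1]
      simp
    have hdotc : dotL w c = ∑ y ∈ hS.toFinset, wt y * dotL w y := by
      rw [hcmass, map_sum]
      simp [smul_eq_mul]
    have hzero : ∀ y ∈ hS.toFinset, y ≠ a → wt y = 0 := by
      by_contra h
      push_neg at h
      obtain ⟨y₀, hy₀S, hy₀ne, hy₀wt⟩ := h
      have hy₀pos : 0 < wt y₀ := lt_of_le_of_ne (hwt0 y₀ (hS.mem_toFinset.mp hy₀S)) (Ne.symm hy₀wt)
      have hlt : ∑ y ∈ hS.toFinset, wt y * dotL w a < ∑ y ∈ hS.toFinset, wt y * dotL w y := by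
        apply Finset.sum_lt_sum
        · intro i hi
          have hia := hhalf i (subset_convexHull ℝ S (hS.mem_toFinset.mp hi))
          exact mul_le_mul_of_nonneg_left hia (hwt0 i (hS.mem_toFinset.mp hi))
        · exact ⟨y₀, hy₀S, by
            have := hmin y₀ (hS.mem_toFinset.mp hy₀S) hy₀ne
            exact mul_lt_mul_of_pos_left this hy₀pos⟩
      rw [← Finset.sum_mul, hwt1, one_mul, ← hdotc, hc_eq] at hlt
      exact lt_irrefl _ hlt
    have haS : a ∈ hS.toFinset := hS.mem_toFinset.mpr ha
    have hwa : wt a = 1 := by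
      rw [← hwt1]
      rw [Finset.sum_eq_single a (fun b hb hba => hzero b hb hba) (fun h => absurd haS h)]
    rw [hcmass, Finset.sum_eq_single a (fun b hb hba => by rw [hzero b hb hba, zero_smul])
      (fun h => absurd haS h), hwa, one_smul]
  refine ⟨⟨a, subset_convexHull ℝ S ha, 0, show (0 : Fin 2 → ℝ) ≤ 0 from le_rfl, add_zero a⟩,
    ?_⟩
  intro x₁ h₁ x₂ h₂ hseg
  obtain ⟨s, t, hs, ht, hst, habeq⟩ := hseg
  have hd1 := hlow x₁ h₁
  have hd2 := hlow x₂ h₂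
  have hdot : s * dotL w x₁ + t * dotL w x₂ = dotL w a := by
    rw [← habeq]; simp [smul_eq_mul]
  have hid : s * dotL w a + t * dotL w a = dotL w a := by
    rw [← add_mul, hst, one_mul]
  have he1 : dotL w x₁ = dotL w a := by
    refine le_antisymm ?_ hd1
    by_contra h
    push_neg at h
    linarith [mul_lt_mul_of_pos_left h hs, mul_le_mul_of_nonneg_left hd2 ht.le]
  have he2 : dotL w x₂ = dotL w a := by
    refine le_antisymm ?_ hd2
    by_contra h
    push_neg at h
    linarith [mul_lt_mul_of_pos_left h ht, mul_le_mul_of_nonneg_left hd1 hs.le]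
  exact heq x₁ h₁ he1

lemma exists_rel_top {α : Type*} (r : α → α → Prop) (htrans : ∀ {a b c}, r a b → r b c → r a c)
    (V : Finset α) (hne : V.Nonempty) (htot : ∀ u ∈ V, ∀ v ∈ V, r u v ∨ r v u) :
    ∃ m ∈ V, ∀ u ∈ V, r u m := by
  classical
  induction V using Finset.induction with
  | empty => exact absurd hne (by simp)
  | @insert x s hx ih =>
    rcases s.eq_empty_or_nonempty with rfl | hs
    · refine ⟨x, by simp, ?_⟩
      intro u hu
      simp only [Finset.mem_insert, Finset.notMem_empty, or_false] at hu
      subst hu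
      exact (htot u (by simp) u (by simp)).elim id id
    · have htot' : ∀ u ∈ s, ∀ v ∈ s, r u v ∨ r v u := fun u hu v hv =>
        htot u (Finset.mem_insert_of_mem hu) v (Finset.mem_insert_of_mem hv)
      obtain ⟨m, hm, hmax⟩ := ih hs htot'
      have hxm := htot x (Finset.mem_insert_self x s) m (Finset.mem_insert_of_mem hm)
      rcases hxm with hxm | hmx
      · refine ⟨m, Finset.mem_insert_of_mem hm, ?_⟩
        intro u hu
        rcases Finset.mem_insert.mp hu with rfl | hu
        · exact hxm
        · exact hmax u hu
      · refine ⟨x, Finset.mem_insert_self x s, ?_⟩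
        intro u hu
        rcases Finset.mem_insert.mp hu with rfl | hu
        · exact (htot u (Finset.mem_insert_self u s) u (Finset.mem_insert_self u s)).elim id id
        · exact htrans (hmax u hu) hmx

lemma staircase_card {α β : Type*} [DecidableEq α] [DecidableEq β]
    (R : β → β → Prop) (Rtrans : ∀ {a b c}, R a b → R b c → R a c)
    (Rantisymm : ∀ {x y}, R x y → R y x → x = y) (f g : α → β) (V : Finset α)
    (hinj : ∀ u ∈ V, ∀ v ∈ V, f u = f v → g u = g v → u = v)
    (halign : ∀ u ∈ V, ∀ v ∈ V, (R (f u) (f v) ∧ R (g u) (g v)) ∨ (R (f v) (f u) ∧ R (g v) (g u)))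
    (hne : V.Nonempty) : V.card + 1 ≤ (V.image f).card + (V.image g).card := by
  classical
  induction V using Finset.strongInduction with
  | _ V ih =>
  obtain ⟨m, hm, hmax⟩ := exists_rel_top
    (fun u v => R (f u) (f v) ∧ R (g u) (g v))
    (fun h1 h2 => ⟨Rtrans h1.1 h2.1, Rtrans h1.2 h2.2⟩) V hne
    (fun u hu v hv => halign u hu v hv)
  rcases (V.erase m).eq_empty_or_nonempty with he | hne'
  · have hV : V = {m} := by
      rcases (Finset.erase_eq_empty_iff V m).mp he with h | h
      · exact absurd h (Finset.nonempty_iff_ne_empty.mp hne)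
      · exact h
    subst hV
    simp
  · have hsub : V.erase m ⊂ V := Finset.erase_ssubset hm
    have IH := ih _ hsub
      (fun u hu v hv => hinj u (Finset.mem_of_mem_erase hu) v (Finset.mem_of_mem_erase hv))
      (fun u hu v hv => halign u (Finset.mem_of_mem_erase hu) v (Finset.mem_of_mem_erase hv))
      hne'
    have hkey : f m ∉ (V.erase m).image f ∨ g m ∉ (V.erase m).image g := by
      by_contra h
      push_neg at h
      obtain ⟨hf, hg⟩ := h
      rw [Finset.mem_image] at hf hg
      obtain ⟨u, huV, hfu⟩ := hf
      obtain ⟨u', hu'V, hgu'⟩ := hg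
      have huV' := Finset.mem_of_mem_erase huV
      have hu'V' := Finset.mem_of_mem_erase hu'V
      have hune : u ≠ m := Finset.ne_of_mem_erase huV
      have hu'ne : u' ≠ m := Finset.ne_of_mem_erase hu'V
      have h1 : g u ≠ g m := fun h => hune (hinj u huV' m hm hfu h)
      have h2 : f u' ≠ f m := fun h => hu'ne (hinj u' hu'V' m hm h hgu')
      have hu_m := hmax u huV'
      have hu'_m := hmax u' hu'V'
      rcases halign u huV' u' hu'V' with ⟨hfa, _⟩ | ⟨_, hga⟩
      · exact h2 (Rantisymm hu'_m.1 (hfu ▸ hfa))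
      · exact h1 (Rantisymm hu_m.2 (hgu' ▸ hga))
    have hVins : V = insert m (V.erase m) := (Finset.insert_erase hm).symm
    have hcV : V.card = (V.erase m).card + 1 := by
      rw [Finset.card_erase_of_mem hm]
      have := Finset.card_pos.mpr ⟨m, hm⟩
      omega
    have hcf : (V.image f).card ≤ ((V.erase m).image f).card + 1 := by
      conv_lhs => rw [hVins]
      rw [Finset.image_insert]
      exact Finset.card_insert_le _ _
    have hcg : (V.image g).card ≤ ((V.erase m).image g).card + 1 := by
      conv_lhs => rw [hVins]
      rw [Finset.image_insert]
      exact Finset.card_insert_le _ _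
    have hcf' : ((V.erase m).image f).card ≤ (V.image f).card :=
      Finset.card_le_card (Finset.image_subset_image (Finset.erase_subset _ _))
    have hcg' : ((V.erase m).image g).card ≤ (V.image g).card :=
      Finset.card_le_card (Finset.image_subset_image (Finset.erase_subset _ _))
    rcases hkey with hk | hk
    · have c1 : (V.image f).card = ((V.erase m).image f).card + 1 := by
        conv_lhs => rw [hVins]
        rw [Finset.image_insert, Finset.card_insert_of_notMem hk]
      omega
    · have c1 : (V.image g).card = ((V.erase m).image g).card + 1 := by
        conv_lhs => rw [hVins]
        rw [Finset.image_insert, Finset.card_insert_of_notMem hk]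
      omega

lemma align_half {au0 au1 av0 av1 p q p' q' : ℝ} (hp : 0 < p) (hq : 0 < q) (hq' : 0 < q')
    (h1 : p * au0 + q * au1 ≤ p * av0 + q * av1)
    (h2 : p' * av0 + q' * av1 ≤ p' * au0 + q' * au1)
    (hcross : p * q' < p' * q) : av0 ≤ au0 ∧ au1 ≤ av1 := by
  have key : (p * q' - p' * q) * (au0 - av0) ≤ 0 := by
    nlinarith [mul_le_mul_of_nonneg_left h1 hq'.le, mul_le_mul_of_nonneg_left h2 hq.le]
  have h01 : av0 ≤ au0 := by nlinarith [key, hcross]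
  refine ⟨h01, ?_⟩
  nlinarith [h1, mul_le_mul_of_nonneg_left (sub_nonneg.mpr h01) hp.le]

lemma eq_of_cross_eq {au0 au1 av0 av1 p q p' q' : ℝ} (hq : 0 < q) (hq' : 0 < q')
    (h1 : p * au0 + q * au1 < p * av0 + q * av1)
    (h2 : p' * av0 + q' * av1 < p' * au0 + q' * au1)
    (hcross : p * q' = p' * q) : False := by
  have key : (p * q' - p' * q) * (au0 - av0) < 0 := by
    nlinarith [mul_lt_mul_of_pos_left h1 hq', mul_lt_mul_of_pos_left h2 hq]
  rw [hcross, sub_self, zero_mul] at key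
  exact lt_irrefl _ key

end MinkowskiAux

/-- series composition step: the number of extreme points of
`conv(A + B) + ℝ²₊` (Minkowski sum) is at most the number of extreme points of
`conv(A) + ℝ²₊` plus the number of extreme points of `conv(B) + ℝ²₊` minus one. -/
theorem extremePoints_minkowski_sum_card_bound
    (A B : Set (Fin 2 → ℝ)) (hA : A.Finite) (hB : B.Finite)
    (hAne : A.Nonempty) (hBne : B.Nonempty) :
    ((convexHull ℝ (A + B) + {v : Fin 2 → ℝ | 0 ≤ v}).extremePoints ℝ).ncard ≤
      ((convexHull ℝ A + {v : Fin 2 → ℝ | 0 ≤ v}).extremePoints ℝ).ncard +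
        ((convexHull ℝ B + {v : Fin 2 → ℝ | 0 ≤ v}).extremePoints ℝ).ncard - 1 := by
  classical
  open MinkowskiAux in
  set C : Set (Fin 2 → ℝ) := {v : Fin 2 → ℝ | 0 ≤ v} with hCdef
  have hSfin : (A + B).Finite := hA.add hB
  set E : Set (Fin 2 → ℝ) := (convexHull ℝ (A + B) + C).extremePoints ℝ with hEdef
  have hEsub : E ⊆ A + B := fun v hv => extreme_mem_self hv
  have hEfin : E.Finite := hSfin.subset hEsub
  set extA : Set (Fin 2 → ℝ) := (convexHull ℝ A + C).extremePoints ℝ with hextA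
  set extB : Set (Fin 2 → ℝ) := (convexHull ℝ B + C).extremePoints ℝ with hextB
  have hextAfin : extA.Finite := hA.subset fun x hx => extreme_mem_self hx
  have hextBfin : extB.Finite := hB.subset fun x hx => extreme_mem_self hx
  -- choose data for each extreme point
  have hdata : ∀ v : Fin 2 → ℝ, ∃ pp : (Fin 2 → ℝ) × (Fin 2 → ℝ) × (Fin 2 → ℝ),
      v ∈ E → pp.1 ∈ A ∧ pp.2.1 ∈ B ∧ pp.1 + pp.2.1 = v ∧ 0 < pp.2.2 0 ∧ 0 < pp.2.2 1 ∧
        (∀ x ∈ A, x ≠ pp.1 → dotL pp.2.2 pp.1 < dotL pp.2.2 x) ∧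
        (∀ x ∈ B, x ≠ pp.2.1 → dotL pp.2.2 pp.2.1 < dotL pp.2.2 x) := by
    intro v
    by_cases hv : v ∈ E
    · obtain ⟨w, hw0, hw1, hmin⟩ := exists_weight hSfin hv
      obtain ⟨a, haA, hamin⟩ := Set.exists_min_image A (dotL w) hA hAne
      obtain ⟨b, hbB, hbmin⟩ := Set.exists_min_image B (dotL w) hB hBne
      obtain ⟨x, hx, y, hy, hxy'⟩ := hEsub hv
      have hxy : x + y = v := hxy'
      have hab : a + b = v := by
        by_contra hne
        have h1 := hmin (a + b) (Set.add_mem_add haA hbB) hne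
        have h2 : dotL w (a + b) ≤ dotL w v := by
          rw [← hxy]
          simp only [map_add]
          exact add_le_add (hamin x hx) (hbmin y hy)
        linarith
      refine ⟨⟨a, b, w⟩, fun _ => ⟨haA, hbB, hab, hw0, hw1, ?_, ?_⟩⟩
      · intro x' hx' hne
        have hxbne : x' + b ≠ v := by
          intro h
          rw [← hab] at h
          exact hne (add_right_cancel h)
        have h1 := hmin (x' + b) (Set.add_mem_add hx' hbB) hxbne
        rw [← hab] at h1
        simp only [map_add] at h1
        linarith
      · intro y' hy' hne
        have hybne : a + y' ≠ v := by
          intro h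
          rw [← hab] at h
          exact hne (add_left_cancel h)
        have h1 := hmin (a + y') (Set.add_mem_add haA hy') hybne
        rw [← hab] at h1
        simp only [map_add] at h1
        linarith
    · exact ⟨⟨0, 0, 0⟩, fun h => absurd h hv⟩
  choose pp hpp using hdata
  set fa : (Fin 2 → ℝ) → (Fin 2 → ℝ) := fun v => (pp v).1 with hfa
  set fb : (Fin 2 → ℝ) → (Fin 2 → ℝ) := fun v => (pp v).2.1 with hfb
  set fw : (Fin 2 → ℝ) → (Fin 2 → ℝ) := fun v => (pp v).2.2 with hfw
  set V : Finset (Fin 2 → ℝ) := hEfin.toFinset with hV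
  have hmemV : ∀ v, v ∈ V ↔ v ∈ E := fun v => hEfin.mem_toFinset
  -- the staircase relation
  set R : (Fin 2 → ℝ) → (Fin 2 → ℝ) → Prop := fun x y => x 0 ≤ y 0 ∧ y 1 ≤ x 1 with hR
  have Rtrans : ∀ {a b c}, R a b → R b c → R a c := fun h1 h2 =>
    ⟨le_trans h1.1 h2.1, le_trans h2.2 h1.2⟩
  have Rantisymm : ∀ {x y}, R x y → R y x → x = y := by
    intro x y h1 h2
    funext j
    fin_cases j
    · exact le_antisymm h1.1 h2.1
    · exact le_antisymm h2.2 h1.2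
  have Rrefl : ∀ x, R x x := fun x => ⟨le_rfl, le_rfl⟩
  have hinj : ∀ u ∈ V, ∀ v ∈ V, fa u = fa v → fb u = fb v → u = v := by
    intro u hu v hv hfae hfbe
    have hu' := hpp u ((hmemV u).mp hu)
    have hv' := hpp v ((hmemV v).mp hv)
    have h1 : (pp u).1 = (pp v).1 := hfae
    have h2 : (pp u).2.1 = (pp v).2.1 := hfbe
    rw [← hu'.2.2.1, ← hv'.2.2.1, h1, h2]
  have halign : ∀ u ∈ V, ∀ v ∈ V,
      (R (fa u) (fa v) ∧ R (fb u) (fb v)) ∨ (R (fa v) (fa u) ∧ R (fb v) (fb u)) := by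
    intro u hu v hv
    obtain ⟨hauA, hbuB, -, hwu0, hwu1, hminAu, hminBu⟩ := hpp u ((hmemV u).mp hu)
    obtain ⟨havA, hbvB, -, hwv0, hwv1, hminAv, hminBv⟩ := hpp v ((hmemV v).mp hv)
    have hAuv : dotL (fw u) (fa u) ≤ dotL (fw u) (fa v) := by
      rcases eq_or_ne (fa v) (fa u) with h | h
      · rw [h]
      · exact (hminAu (fa v) havA h).le
    have hAvu : dotL (fw v) (fa v) ≤ dotL (fw v) (fa u) := by
      rcases eq_or_ne (fa u) (fa v) with h | h
      · rw [h]
      · exact (hminAv (fa u) hauA h).le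
    have hBuv : dotL (fw u) (fb u) ≤ dotL (fw u) (fb v) := by
      rcases eq_or_ne (fb v) (fb u) with h | h
      · rw [h]
      · exact (hminBu (fb v) hbvB h).le
    have hBvu : dotL (fw v) (fb v) ≤ dotL (fw v) (fb u) := by
      rcases eq_or_ne (fb u) (fb v) with h | h
      · rw [h]
      · exact (hminBv (fb u) hbuB h).le
    rw [dotL_apply, dotL_apply] at hAuv hAvu hBuv hBvu
    rcases lt_trichotomy (fw u 0 * fw v 1) (fw v 0 * fw u 1) with hlt | heqc | hgt
    · right
      obtain ⟨hA1, hA2⟩ := align_half hwu0 hwu1 hwv1 hAuv hAvu hlt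
      obtain ⟨hB1, hB2⟩ := align_half hwu0 hwu1 hwv1 hBuv hBvu hlt
      exact ⟨⟨hA1, hA2⟩, ⟨hB1, hB2⟩⟩
    · -- same slope: the minimizers coincide
      have hfaeq : fa u = fa v := by
        by_contra hne
        have h1 := hminAu (fa v) havA (Ne.symm hne)
        have h2 := hminAv (fa u) hauA hne
        rw [dotL_apply, dotL_apply] at h1 h2
        exact eq_of_cross_eq hwu1 hwv1 h1 h2 heqc
      have hfbeq : fb u = fb v := by
        by_contra hne
        have h1 := hminBu (fb v) hbvB (Ne.symm hne)
        have h2 := hminBv (fb u) hbuB hne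
        rw [dotL_apply, dotL_apply] at h1 h2
        exact eq_of_cross_eq hwu1 hwv1 h1 h2 heqc
      left
      rw [hfaeq, hfbeq]
      exact ⟨Rrefl _, Rrefl _⟩
    · left
      obtain ⟨hA1, hA2⟩ := align_half hwv0 hwv1 hwu1 hAvu hAuv hgt
      obtain ⟨hB1, hB2⟩ := align_half hwv0 hwv1 hwu1 hBvu hBuv hgt
      exact ⟨⟨hA1, hA2⟩, ⟨hB1, hB2⟩⟩
  -- image bounds
  have hfaimg : ((V.image fa : Finset (Fin 2 → ℝ)) : Set (Fin 2 → ℝ)) ⊆ extA := by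
    intro x hx
    simp only [Finset.coe_image, Set.mem_image, Finset.mem_coe] at hx
    obtain ⟨v, hv, rfl⟩ := hx
    obtain ⟨hauA, _, _, hwu0, hwu1, hminAu, _⟩ := hpp v ((hmemV v).mp hv)
    exact strictmin_extreme hA hwu0 hwu1 hauA hminAu
  have hfbimg : ((V.image fb : Finset (Fin 2 → ℝ)) : Set (Fin 2 → ℝ)) ⊆ extB := by
    intro x hx
    simp only [Finset.coe_image, Set.mem_image, Finset.mem_coe] at hx
    obtain ⟨v, hv, rfl⟩ := hx
    obtain ⟨_, hbuB, _, hwu0, hwu1, _, hminBu⟩ := hpp v ((hmemV v).mp hv)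
    exact strictmin_extreme hB hwu0 hwu1 hbuB hminBu
  have hcardfa : (V.image fa).card ≤ extA.ncard := by
    rw [← Set.ncard_coe_finset]
    exact Set.ncard_le_ncard hfaimg hextAfin
  have hcardfb : (V.image fb).card ≤ extB.ncard := by
    rw [← Set.ncard_coe_finset]
    exact Set.ncard_le_ncard hfbimg hextBfin
  have hEcard : E.ncard = V.card := Set.ncard_eq_toFinset_card E hEfin
  rcases V.eq_empty_or_nonempty with hVemp | hVne
  · rw [hEcard, hVemp]
    simp
  · have hcount := staircase_card R Rtrans Rantisymm fa fb V hinj halign hVne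
    rw [hEcard]
    omega
end

section
/- Let ℓ ≥ 1 and w ≥ 1 model a layered graph with ℓ layers each of width w: an s–t path is a function π : Fin ℓ → Fin w choosing one node per layer. A cost system consists of start costs a : Fin w → ℝ, transition costs t : Fin (ℓ−1) → Fin w → Fin w → ℝ, and end costs b : Fin w → ℝ, and assigns to π the cost a(π(0)) + Σ_{i=0}^{ℓ−2} t(i, π(i), π(i+1)) + b(π(ℓ−1)). Let f and g be the cost functions of two such cost systems and let V = conv({(f(π), g(π)) : π : Fin ℓ → Fin w}) + ℝ²₊. Then the number of extreme points of V is at most (2w)^{⌈log₂(ℓ+1)⌉}. -/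
open Pointwise

/-- The cost that a cost system (start costs `a`, transition costs `t`, end costs `b`)
of a layered graph with `ℓ` layers of width `w` assigns to an s–t path
`π : Fin ℓ → Fin w` (one node per layer):
`a(π 0) + Σ_{i=0}^{ℓ-2} t(i, π i, π (i+1)) + b(π (ℓ-1))`. -/
def layeredCost (ℓ w : ℕ) (hℓ : 1 ≤ ℓ) (a : Fin w → ℝ)
    (t : Fin (ℓ - 1) → Fin w → Fin w → ℝ) (b : Fin w → ℝ)
    (π : Fin ℓ → Fin w) : ℝ :=
  a (π ⟨0, by omega⟩) +
    (∑ i : Fin (ℓ - 1),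
      t i (π ⟨i.val, by have := i.isLt; omega⟩) (π ⟨i.val + 1, by have := i.isLt; omega⟩)) +
    b (π ⟨ℓ - 1, by omega⟩)

noncomputable section LG
namespace LG

abbrev V2 := Fin 2 → ℝ
def C : Set V2 := {v | 0 ≤ v}
def eVal (l : ℝ) (p : V2) : ℝ := p 0 + l * p 1
def Exp (S : Set V2) : Set V2 :=
  {p | p ∈ S ∧ ∃ l : ℝ, 0 < l ∧ ∀ q ∈ S, q ≠ p → eVal l p < eVal l q}

lemma Exp_subset (S : Set V2) : Exp S ⊆ S := fun _ h => h.1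

lemma Exp_singleton (p : V2) : Exp {p} = {p} := by
  apply Set.Subset.antisymm (Exp_subset _)
  rintro q rfl
  exact ⟨rfl, 1, one_pos, by rintro r rfl h; exact absurd rfl h⟩

lemma Exp_iUnion {ι : Type*} (S : ι → Set V2) : Exp (⋃ x, S x) ⊆ ⋃ x, Exp (S x) := by
  rintro p ⟨hp, l, hl, hmin⟩
  obtain ⟨x, hx⟩ := Set.mem_iUnion.1 hp
  exact Set.mem_iUnion.2 ⟨x, hx, l, hl, fun q hq hne =>
    hmin q (Set.mem_iUnion.2 ⟨x, hq⟩) hne⟩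

lemma convex_C : Convex ℝ C := convex_Ici 0
lemma zero_mem_C : (0 : V2) ∈ C := Set.mem_setOf_eq ▸ le_refl (0 : V2)
lemma isClosed_C : IsClosed C := by
  have : C = ⋂ i : Fin 2, {v : V2 | (0:ℝ) ≤ v i} := by
    ext v; simp [C, Pi.le_def, Set.mem_iInter]
  rw [this]
  exact isClosed_iInter fun i => isClosed_le continuous_const (continuous_apply i)

lemma add_C_mem {S : Set V2} {p c : V2} (hp : p ∈ convexHull ℝ S + C) (hc : c ∈ C) :
    p + c ∈ convexHull ℝ S + C := by
  obtain ⟨q, hq, d, hd, rfl⟩ := hp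
  exact ⟨q, hq, d + c, (show (0:V2) ≤ d + c from add_nonneg hd hc),
    by funext j; simp only [Pi.add_apply]; ring⟩

/-- extreme points of conv S + C are in S -/
lemma ext_mem {S : Set V2} {p : V2}
    (hp : p ∈ (convexHull ℝ S + C).extremePoints ℝ) : p ∈ S := by
  obtain ⟨hpV, hext⟩ := hp
  obtain ⟨q, hq, c, hc, hqc⟩ := hpV
  have hqV : q ∈ convexHull ℝ S + C := ⟨q, hq, 0, zero_mem_C, add_zero q⟩
  have hpcV : p + c ∈ convexHull ℝ S + C := by
    rw [← hqc]; exact ⟨q, hq, c + c, (show (0:V2) ≤ c + c from add_nonneg hc hc),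
      by funext j; simp only [Pi.add_apply]; ring⟩
  have hseg : p ∈ openSegment ℝ q (p + c) := by
    refine ⟨1/2, 1/2, by norm_num, by norm_num, by norm_num, ?_⟩
    rw [← hqc]
    funext i
    simp only [Pi.add_apply, Pi.smul_apply, smul_eq_mul]
    ring
  obtain ⟨h1, h2⟩ : q = p ∧ p + c = p :=
    ⟨hext hqV hpcV hseg, hext hpcV hqV (by rw [openSegment_symm]; exact hseg)⟩
  have hc0 : c = 0 := by
    have : p + c = p + 0 := by rw [add_zero]; exact h2
    exact add_left_cancel this
  rw [hc0] at hqc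
  have hqp : q = p := by rw [← hqc]; exact (add_zero q).symm
  rw [hqp] at hq
  -- p = q ∈ convexHull S, and p is extreme point of convexHull S
  have hmem : p ∈ (convexHull ℝ S).extremePoints ℝ := by
    refine ⟨hq, fun x₁ h₁ x₂ h₂ hseg => hext ?_ ?_ hseg⟩
    · exact ⟨x₁, h₁, 0, zero_mem_C, add_zero _⟩
    · exact ⟨x₂, h₂, 0, zero_mem_C, add_zero _⟩
  exact extremePoints_convexHull_subset hmem

/-- exposure in x-direction -/
lemma mem_Exp_A {S : Set V2} (hS : S.Finite) {p : V2} (hp : p ∈ S)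
    (h : ∀ q ∈ S, q ≠ p → p 0 < q 0) : p ∈ Exp S := by
  classical
  set F := hS.toFinset.erase p with hF_def
  by_cases hF : F.Nonempty
  · set eps : V2 → ℝ := fun q => if p 1 ≤ q 1 then 1 else (q 0 - p 0) / (p 1 - q 1) with heps
    have hqmem : ∀ q ∈ F, q ∈ S ∧ q ≠ p := by
      intro q hq
      rw [hF_def, Finset.mem_erase, Set.Finite.mem_toFinset] at hq
      exact ⟨hq.2, hq.1⟩
    set m := F.inf' hF eps with hm_def
    have hm : 0 < m := by
      rw [hm_def, Finset.lt_inf'_iff]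
      intro q hq
      obtain ⟨hqS, hqne⟩ := hqmem q hq
      rw [heps]
      by_cases hb : p 1 ≤ q 1
      · simp [hb]
      · simp only [hb, if_false]
        push_neg at hb
        exact div_pos (by linarith [h q hqS hqne]) (by linarith)
    set l := min 1 (m / 2) with hl_def
    have hl : 0 < l := lt_min one_pos (half_pos hm)
    refine ⟨hp, l, hl, fun q hq hne => ?_⟩
    have hqF : q ∈ F := by
      rw [hF_def, Finset.mem_erase, Set.Finite.mem_toFinset]; exact ⟨hne, hq⟩
    have hle : l < eps q :=
      lt_of_le_of_lt (min_le_right _ _)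
        (lt_of_lt_of_le (half_lt_self hm) (Finset.inf'_le _ hqF))
    show p 0 + l * p 1 < q 0 + l * q 1
    by_cases hb : p 1 ≤ q 1
    · have h1 : l * p 1 ≤ l * q 1 := mul_le_mul_of_nonneg_left hb hl.le
      have := h q hq hne; linarith
    · push_neg at hb
      have heq : eps q = (q 0 - p 0) / (p 1 - q 1) := by rw [heps]; simp [not_le.2 hb]
      rw [heq] at hle
      have : l * (p 1 - q 1) < q 0 - p 0 := (lt_div_iff₀ (by linarith)).1 hle
      linarith
  · exact ⟨hp, 1, one_pos, fun q hq hne =>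
      absurd ⟨q, by rw [hF_def, Finset.mem_erase, Set.Finite.mem_toFinset]; exact ⟨hne, hq⟩⟩ hF⟩

/-- exposure in y-direction -/
lemma mem_Exp_B {S : Set V2} (hS : S.Finite) {p : V2} (hp : p ∈ S)
    (h : ∀ q ∈ S, q ≠ p → p 1 < q 1) : p ∈ Exp S := by
  classical
  set F := hS.toFinset.erase p with hF_def
  by_cases hF : F.Nonempty
  · set M : V2 → ℝ := fun q => max ((p 0 - q 0) / (q 1 - p 1)) 0 with hM
    set l := F.sup' hF M + 1 with hl_def
    have hsup : 0 ≤ F.sup' hF M := by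
      obtain ⟨q, hq⟩ := hF
      exact le_trans (le_max_right _ _) (Finset.le_sup' M hq)
    have hl : 0 < l := by rw [hl_def]; linarith
    refine ⟨hp, l, hl, fun q hq hne => ?_⟩
    have hqF : q ∈ F := by
      rw [hF_def, Finset.mem_erase, Set.Finite.mem_toFinset]; exact ⟨hne, hq⟩
    have h1 : q 1 - p 1 > 0 := by linarith [h q hq hne]
    have h2 : (p 0 - q 0) / (q 1 - p 1) < l := by
      calc (p 0 - q 0) / (q 1 - p 1) ≤ M q := le_max_left _ _
      _ ≤ F.sup' hF M := Finset.le_sup' M hqF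
      _ < l := by rw [hl_def]; linarith
    have h3 : p 0 - q 0 < l * (q 1 - p 1) := by
      rw [div_lt_iff₀ h1] at h2; linarith
    show p 0 + l * p 1 < q 0 + l * q 1
    nlinarith
  · exact ⟨hp, 1, one_pos, fun q hq hne =>
      absurd ⟨q, by rw [hF_def, Finset.mem_erase, Set.Finite.mem_toFinset]; exact ⟨hne, hq⟩⟩ hF⟩

lemma mem_Exp_of_dir {S : Set V2} (hS : S.Finite) {p : V2} (hp : p ∈ S)
    (c0 c1 : ℝ) (h0 : 0 ≤ c0) (h1 : 0 ≤ c1) (hne : ¬(c0 = 0 ∧ c1 = 0))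
    (hmin : ∀ q ∈ S, q ≠ p → c0 * p 0 + c1 * p 1 < c0 * q 0 + c1 * q 1) :
    p ∈ Exp S := by
  rcases eq_or_lt_of_le h0 with hc0 | hc0
  · -- c0 = 0, c1 > 0
    have hc1 : 0 < c1 := by
      rcases eq_or_lt_of_le h1 with hc1 | hc1
      · exact absurd ⟨hc0.symm, hc1.symm⟩ hne
      · exact hc1
    refine mem_Exp_B hS hp (fun q hq hqne => ?_)
    have := hmin q hq hqne
    rw [← hc0] at this
    simp only [zero_mul, zero_add] at this
    exact lt_of_mul_lt_mul_left this hc1.le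
  · rcases eq_or_lt_of_le h1 with hc1 | hc1
    · -- c1 = 0, c0 > 0
      refine mem_Exp_A hS hp (fun q hq hqne => ?_)
      have := hmin q hq hqne
      rw [← hc1] at this
      simp only [zero_mul, add_zero] at this
      exact lt_of_mul_lt_mul_left this hc0.le
    · -- both positive
      refine ⟨hp, c1 / c0, div_pos hc1 hc0, fun q hq hqne => ?_⟩
      have h := hmin q hq hqne
      have key : c0 * (p 0 + c1 / c0 * p 1) < c0 * (q 0 + c1 / c0 * q 1) := by
        field_simp
        linarith
      exact lt_of_mul_lt_mul_left key hc0.le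

lemma single_nonneg' (i : Fin 2) : (0 : V2) ≤ Pi.single i 1 := by
  intro j
  rcases eq_or_ne j i with rfl | hne
  · simp
  · simp [Pi.single_apply, hne]

lemma extreme_subset_Exp {S : Set V2} (hS : S.Finite) :
    (convexHull ℝ S + C).extremePoints ℝ ⊆ Exp S := by
  intro p hp
  have hpS : p ∈ S := ext_mem hp
  by_cases htriv : S \ {p} = ∅
  · refine ⟨hpS, 1, one_pos, fun q hq hne => absurd ?_ (Set.not_nonempty_iff_eq_empty.2 htriv)⟩
    exact ⟨q, hq, hne⟩
  · set W := convexHull ℝ (S \ {p}) + C with hW_def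
    have hWV : W ⊆ convexHull ℝ S + C :=
      Set.add_subset_add_right (convexHull_mono Set.diff_subset)
    have hWconv : Convex ℝ W := (convex_convexHull ℝ _).add convex_C
    have hWclosed : IsClosed W :=
      IsClosed.add_left_of_isCompact isClosed_C ((Set.Finite.diff hS : (S \ {p}).Finite).isCompact_convexHull (𝕜 := ℝ))
    have hpW : p ∉ W := by
      intro hmem
      have hpextW : p ∈ W.extremePoints ℝ := by
        obtain ⟨_, hext⟩ := hp
        exact ⟨hmem, fun x₁ h₁ x₂ h₂ hseg => hext (hWV h₁) (hWV h₂) hseg⟩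
      have := ext_mem (S := S \ {p}) hpextW
      exact this.2 rfl
    obtain ⟨f, u, hfp, hfW⟩ := geometric_hahn_banach_point_closed hWconv hWclosed hpW
    set c0 := f (Pi.single 0 1) with hc0_def
    set c1 := f (Pi.single 1 1) with hc1_def
    have hrepr : ∀ x : V2, f x = c0 * x 0 + c1 * x 1 := by
      intro x
      have hx : x = x 0 • (Pi.single (0 : Fin 2) (1:ℝ) : V2) + x 1 • (Pi.single (1 : Fin 2) (1:ℝ) : V2) := by
        funext i; fin_cases i <;> simp
      rw [show f x = f (x 0 • (Pi.single (0 : Fin 2) (1:ℝ) : V2) + x 1 • (Pi.single (1 : Fin 2) (1:ℝ) : V2)) from by rw [← hx]]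
      rw [map_add, map_smul, map_smul, smul_eq_mul, smul_eq_mul]
      ring
    obtain ⟨y0, hy0⟩ := Set.nonempty_iff_ne_empty.2 htriv
    have hy0W : y0 ∈ W := ⟨y0, subset_convexHull ℝ _ hy0, 0, zero_mem_C, add_zero _⟩
    have hnn : ∀ i : Fin 2, 0 ≤ f (Pi.single i 1) := by
      intro i
      by_contra hneg
      push_neg at hneg
      obtain ⟨n, hn⟩ := exists_nat_gt ((f y0 - u) / (-f (Pi.single i 1)))
      have hyn : y0 + (n : ℝ) • (Pi.single i 1 : V2) ∈ W := by
        obtain ⟨q, hq, d, hd, rfl⟩ := hy0W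
        refine ⟨q, hq, d + (n : ℝ) • (Pi.single i 1 : V2), ?_,
          by funext j; simp only [Pi.add_apply, Pi.smul_apply, smul_eq_mul]; ring⟩
        exact add_nonneg hd (smul_nonneg n.cast_nonneg (single_nonneg' i))
      have h2 := hfW _ hyn
      rw [map_add, map_smul, smul_eq_mul] at h2
      have h3 : f y0 - u < (n : ℝ) * (-f (Pi.single i 1)) := by
        rw [div_lt_iff₀ (neg_pos.2 hneg)] at hn
        exact hn
      linarith
    refine mem_Exp_of_dir hS hpS c0 c1 (hnn 0) (hnn 1) ?_ ?_
    · rintro ⟨h00, h10⟩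
      have hfy0 : f y0 = 0 := by rw [hrepr y0, h00, h10]; ring
      have hfp0 : f p = 0 := by rw [hrepr p, h00, h10]; ring
      have := hfW y0 hy0W
      rw [hfy0] at this
      rw [hfp0] at hfp
      linarith
    · intro q hq hne
      have hqW : q ∈ W := ⟨q, subset_convexHull ℝ _ ⟨hq, hne⟩, 0, zero_mem_C, add_zero _⟩
      have h := hfp.trans (hfW q hqW)
      rw [hrepr p, hrepr q] at h
      exact h

lemma eVal_add (l : ℝ) (a b : V2) : eVal l (a + b) = eVal l a + eVal l b := by
  simp only [eVal, Pi.add_apply]; ring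

lemma minkowski {P Q : Set V2} (hP : P.Finite) (hQ : Q.Finite) :
    (Exp (P + Q)).ncard ≤ (Exp P).ncard + (Exp Q).ncard := by
  classical
  set E := Exp (P + Q) with hE_def
  have hchoice : ∀ e ∈ E, ∃ pq : V2 × V2, ∃ l : ℝ,
      pq.1 ∈ P ∧ pq.2 ∈ Q ∧ pq.1 + pq.2 = e ∧ 0 < l ∧
      ∀ z ∈ P + Q, z ≠ e → eVal l e < eVal l z := by
    rintro e ⟨heS, l, hl, hmin⟩
    obtain ⟨p, hp, q, hq, rfl⟩ := Set.mem_add.1 heS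
    exact ⟨(p, q), l, hp, hq, rfl, hl, hmin⟩
  choose! pq lam hu hv huv hlam hmin using hchoice
  set u : V2 → V2 := fun e => (pq e).1 with hu_def
  set v : V2 → V2 := fun e => (pq e).2 with hv_def
  -- u e is the unique minimizer of P at lam e
  have humin : ∀ e ∈ E, ∀ p' ∈ P, p' ≠ u e →
      eVal (lam e) (u e) < eVal (lam e) p' := by
    intro e he p' hp' hne
    have hz : p' + v e ∈ P + Q := Set.add_mem_add hp' (hv e he)
    have hzne : p' + v e ≠ e := by
      intro h
      apply hne
      have h2 : p' + v e = u e + v e := by rw [h, huv e he]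
      exact add_right_cancel h2
    have hlt := hmin e he _ hz hzne
    have h1 : eVal (lam e) (u e + v e) = eVal (lam e) (u e) + eVal (lam e) (v e) :=
      eVal_add _ _ _
    have h2 : eVal (lam e) (p' + v e) = eVal (lam e) p' + eVal (lam e) (v e) :=
      eVal_add _ _ _
    rw [huv e he] at h1
    linarith
  have hvmin : ∀ e ∈ E, ∀ q' ∈ Q, q' ≠ v e →
      eVal (lam e) (v e) < eVal (lam e) q' := by
    intro e he q' hq' hne
    have hz : u e + q' ∈ P + Q := Set.add_mem_add (hu e he) hq'
    have hzne : u e + q' ≠ e := by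
      intro h
      apply hne
      have h2 : u e + q' = u e + v e := by rw [h, huv e he]
      exact add_left_cancel h2
    have hlt := hmin e he _ hz hzne
    have h1 : eVal (lam e) (u e + v e) = eVal (lam e) (u e) + eVal (lam e) (v e) :=
      eVal_add _ _ _
    have h2 : eVal (lam e) (u e + q') = eVal (lam e) (u e) + eVal (lam e) q' :=
      eVal_add _ _ _
    rw [huv e he] at h1
    linarith
  have huE : ∀ e ∈ E, u e ∈ Exp P := fun e he =>
    ⟨hu e he, lam e, hlam e he, humin e he⟩
  have hvE : ∀ e ∈ E, v e ∈ Exp Q := fun e he =>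
    ⟨hv e he, lam e, hlam e he, hvmin e he⟩
  have hlam_inj : ∀ e ∈ E, ∀ e' ∈ E, lam e = lam e' → e = e' := by
    intro e he e' he' hll
    by_contra hne
    have h1 := hmin e he e' he'.1 (Ne.symm hne)
    have h2 := hmin e' he' e he.1 hne
    rw [hll] at h1
    linarith
  have humono : ∀ e ∈ E, ∀ e' ∈ E, lam e < lam e' → u e ≠ u e' →
      u e' 1 < u e 1 := by
    intro e he e' he' hlt hne
    have h1 := humin e he (u e') (hu e' he') (Ne.symm hne)
    have h2 := humin e' he' (u e) (hu e he) hne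
    simp only [eVal] at h1 h2
    nlinarith
  have hvmono : ∀ e ∈ E, ∀ e' ∈ E, lam e < lam e' → v e ≠ v e' →
      v e' 1 < v e 1 := by
    intro e he e' he' hlt hne
    have h1 := hvmin e he (v e') (hv e' he') (Ne.symm hne)
    have h2 := hvmin e' he' (v e) (hv e he) hne
    simp only [eVal] at h1 h2
    nlinarith
  have hint : ∀ e ∈ E, ∀ e' ∈ E, ∀ e'' ∈ E, lam e < lam e' → lam e' < lam e'' →
      u e = u e'' → u e' = u e := by
    intro e he e' he' e'' he'' h1 h2 hueq
    by_contra hne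
    have m1 : u e' 1 < u e 1 := humono e he e' he' h1 (fun h => hne h.symm)
    by_cases h3 : u e' = u e''
    · exact hne (h3.trans hueq.symm)
    · have m2 : u e'' 1 < u e' 1 := humono e' he' e'' he'' h2 h3
      have heq1 : u e 1 = u e'' 1 := congrFun hueq 1
      linarith
  set Mx : V2 → Prop := fun e => ∀ e' ∈ E, u e' = u e → lam e' ≤ lam e with hMx_def
  set A₁ : Set V2 := {e ∈ E | Mx e} with hA1_def
  set A₂ : Set V2 := {e ∈ E | ¬ Mx e} with hA2_def
  have hEfin : E.Finite := (hP.add hQ).subset (Exp_subset _)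
  have hPfin : (Exp P).Finite := hP.subset (Exp_subset _)
  have hQfin : (Exp Q).Finite := hQ.subset (Exp_subset _)
  have hA1 : A₁.ncard ≤ (Exp P).ncard := by
    refine Set.ncard_le_ncard_of_injOn u (fun e he => huE e he.1) ?_ hPfin
    intro e he e' he' hee
    have l1 : lam e ≤ lam e' := he'.2 e he.1 hee
    have l2 : lam e' ≤ lam e := he.2 e' he'.1 hee.symm
    exact hlam_inj e he.1 e' he'.1 (le_antisymm l1 l2)
  have hA2 : A₂.ncard ≤ (Exp Q).ncard := by
    refine Set.ncard_le_ncard_of_injOn v (fun e he => hvE e he.1) ?_ hQfin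
    have key : ∀ e ∈ A₂, ∀ e' ∈ A₂, lam e < lam e' → v e = v e' → False := by
      rintro e ⟨he, hMe⟩ e' ⟨he', hMe'⟩ hlt hvv
      have hune : u e ≠ u e' := by
        intro h
        have : e = e' := by
          rw [← huv e he, ← huv e' he']
          show u e + v e = u e' + v e'
          rw [h, hvv]
        rw [this] at hlt
        exact lt_irrefl _ hlt
      have hMe2 : ∃ e₁ ∈ E, u e₁ = u e ∧ lam e < lam e₁ := by
        by_contra hcon
        push_neg at hcon
        exact hMe (fun e' he' hu' => hcon e' he' hu')
      obtain ⟨e₁, he₁, hu1eq, hlam1⟩ := hMe2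
      rcases lt_trichotomy (lam e₁) (lam e') with hc | hc | hc
      · have he₁ne : e₁ ≠ e := by
          intro h; rw [h] at hlam1; exact lt_irrefl _ hlam1
        have hv1 : v e₁ ≠ v e := by
          intro h
          refine he₁ne ?_
          rw [← huv e₁ he₁, ← huv e he]
          show u e₁ + v e₁ = u e + v e
          rw [hu1eq, h]
        have m1 : v e₁ 1 < v e 1 := hvmono e he e₁ he₁ hlam1 (fun h => hv1 h.symm)
        by_cases hv2 : v e' = v e₁
        · have : v e 1 = v e₁ 1 := by rw [hvv, hv2]
          linarith
        · have m2 : v e' 1 < v e₁ 1 := hvmono e₁ he₁ e' he' hc (fun h => hv2 h.symm)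
          have : v e 1 = v e' 1 := congrFun hvv 1
          linarith
      · have : e₁ = e' := hlam_inj e₁ he₁ e' he' hc
        rw [this] at hu1eq
        exact hune hu1eq.symm
      · exact hune (hint e he e' he' e₁ he₁ hlt hc hu1eq.symm).symm
    intro e he e' he' hvv
    by_contra hne
    rcases lt_trichotomy (lam e) (lam e') with hc | hc | hc
    · exact key e he e' he' hc hvv
    · exact hne (hlam_inj e he.1 e' he'.1 hc)
    · exact key e' he' e he hc hvv.symm
  have hcover : E ⊆ A₁ ∪ A₂ := by
    intro e he
    by_cases h : Mx e
    · exact Or.inl ⟨he, h⟩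
    · exact Or.inr ⟨he, h⟩
  calc E.ncard ≤ (A₁ ∪ A₂).ncard := by
        refine Set.ncard_le_ncard hcover ?_
        exact (hEfin.subset (fun x hx => hx.1)).union (hEfin.subset (fun x hx => hx.1))
  _ ≤ A₁.ncard + A₂.ncard := Set.ncard_union_le _ _
  _ ≤ (Exp P).ncard + (Exp Q).ncard := add_le_add hA1 hA2

inductive Good (w : ℕ) : ℕ → Set V2 → Prop
  | single (p : V2) : Good w 0 {p}
  | step {k : ℕ} (P Q : Fin w → Set V2)
      (hP : ∀ x, Good w k (P x)) (hQ : ∀ x, Good w k (Q x)) :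
      Good w (k + 1) (⋃ x : Fin w, P x + Q x)

lemma Good.finite {w k : ℕ} {S : Set V2} (h : Good w k S) : S.Finite := by
  induction h with
  | single p => exact Set.finite_singleton p
  | step P Q hP hQ ihP ihQ => exact Set.finite_iUnion (fun x => (ihP x).add (ihQ x))

lemma add_zero_set (S : Set V2) : S + ({0} : Set V2) = S := by
  rw [Set.add_singleton]
  simp

lemma Good.singleton_all {w : ℕ} (hw : 1 ≤ w) (k : ℕ) (p : V2) : Good w k {p} := by
  induction k generalizing p with
  | zero => exact Good.single p
  | succ k ih =>
    haveI : Nonempty (Fin w) := ⟨⟨0, hw⟩⟩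
    have h : ({p} : Set V2) = ⋃ _ : Fin w, ({p} : Set V2) + ({0} : Set V2) := by
      rw [add_zero_set, Set.iUnion_const]
    rw [h]
    exact Good.step _ _ (fun _ => ih p) (fun _ => ih 0)

lemma Good.lift {w k : ℕ} {S : Set V2} (hw : 1 ≤ w) (h : Good w k S) : Good w (k + 1) S := by
  haveI : Nonempty (Fin w) := ⟨⟨0, hw⟩⟩
  have heq : S = ⋃ _ : Fin w, S + ({0} : Set V2) := by
    rw [add_zero_set, Set.iUnion_const]
  rw [heq]
  exact Good.step _ _ (fun _ => h) (fun _ => Good.singleton_all hw k 0)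

lemma Good.mono {w k k' : ℕ} {S : Set V2} (hw : 1 ≤ w) (hk : k ≤ k') (h : Good w k S) :
    Good w k' S := by
  induction hk with
  | refl => exact h
  | step _ ih => exact ih.lift hw

lemma ncard_iUnion_le {w : ℕ} (T : Fin w → Set V2) (hT : ∀ x, (T x).Finite) :
    (⋃ x, T x).ncard ≤ ∑ x : Fin w, (T x).ncard := by
  induction w with
  | zero => simp
  | succ n ih =>
    have hsplit : (⋃ x : Fin (n+1), T x) = (⋃ x : Fin n, T x.castSucc) ∪ T (Fin.last n) := by
      ext y
      simp only [Set.mem_iUnion, Set.mem_union]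
      constructor
      · rintro ⟨x, hx⟩
        rcases Fin.eq_castSucc_or_eq_last x with ⟨i, rfl⟩ | h
        · exact Or.inl ⟨i, hx⟩
        · rw [h] at hx; exact Or.inr hx
      · rintro (⟨x, hx⟩ | hx)
        · exact ⟨x.castSucc, hx⟩
        · exact ⟨Fin.last n, hx⟩
    rw [hsplit, Fin.sum_univ_castSucc]
    calc ((⋃ x : Fin n, T x.castSucc) ∪ T (Fin.last n)).ncard
        ≤ (⋃ x : Fin n, T x.castSucc).ncard + (T (Fin.last n)).ncard :=
          Set.ncard_union_le _ _
      _ ≤ (∑ x : Fin n, (T x.castSucc).ncard) + (T (Fin.last n)).ncard :=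
          Nat.add_le_add_right (ih _ (fun x => hT _)) _

lemma Good.count {w k : ℕ} {S : Set V2} (h : Good w k S) :
    (Exp S).ncard ≤ (2 * w) ^ k := by
  induction h with
  | single p =>
    rw [Exp_singleton]
    simp
  | @step k P Q hP hQ ihP ihQ =>
    calc (Exp (⋃ x, P x + Q x)).ncard
        ≤ (⋃ x, Exp (P x + Q x)).ncard := by
          refine Set.ncard_le_ncard (Exp_iUnion _) ?_
          exact Set.finite_iUnion (fun x =>
            (((hP x).finite.add (hQ x).finite).subset (Exp_subset _)))
      _ ≤ ∑ x : Fin _, (Exp (P x + Q x)).ncard := by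
          apply ncard_iUnion_le
          exact fun x => (((hP x).finite.add (hQ x).finite).subset (Exp_subset _))
      _ ≤ ∑ _x : Fin w, ((2 * w) ^ k + (2 * w) ^ k) := by
          refine Finset.sum_le_sum (fun x _ => ?_)
          exact le_trans (minkowski (hP x).finite (hQ x).finite)
            (add_le_add (ihP x) (ihQ x))
      _ ≤ (2 * w) ^ (k + 1) := by
          rw [Finset.sum_const, Finset.card_univ, Fintype.card_fin, smul_eq_mul, pow_succ]
          ring_nf
          omega

def pathCost (w n : ℕ) (a : Fin w → ℝ) (t : Fin n → Fin w → Fin w → ℝ)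
    (b : Fin w → ℝ) (π : Fin (n + 1) → Fin w) : ℝ :=
  a (π ⟨0, by omega⟩) +
    (∑ i : Fin n, t i (π ⟨i.val, by omega⟩) (π ⟨i.val + 1, by omega⟩)) +
    b (π ⟨n, by omega⟩)

lemma cost_split0 (w n : ℕ) (a : Fin w → ℝ) (t : Fin (n + 1) → Fin w → Fin w → ℝ)
    (b : Fin w → ℝ) (π : Fin (n + 2) → Fin w) :
    pathCost w (n + 1) a t b π =
      a (π ⟨0, by omega⟩) +
        pathCost w n (fun y => t ⟨0, by omega⟩ (π ⟨0, by omega⟩) y)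
          (fun i => t ⟨i.val + 1, by omega⟩) b
          (fun j => π ⟨j.val + 1, by omega⟩) := by
  classical
  set F : ℕ → ℝ := fun i =>
    if h : i < n + 1 then
      t ⟨i, h⟩ (π ⟨i, by omega⟩) (π ⟨i + 1, by omega⟩)
    else 0 with hF
  have hmain : (∑ i : Fin (n + 1), t i (π ⟨i.val, by omega⟩) (π ⟨i.val + 1, by omega⟩))
      = ∑ i ∈ Finset.range (n + 1), F i := by
    rw [← Fin.sum_univ_eq_sum_range]
    refine Finset.sum_congr rfl (fun i _ => ?_)
    simp only [hF]
    rw [dif_pos i.isLt]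
  have hsuf : (∑ i : Fin n, t ⟨i.val + 1, by omega⟩
        (π ⟨i.val + 1, by omega⟩) (π ⟨i.val + 1 + 1, by omega⟩))
      = ∑ i ∈ Finset.range n, F (i + 1) := by
    rw [← Fin.sum_univ_eq_sum_range (fun i => F (i + 1))]
    refine Finset.sum_congr rfl (fun i _ => ?_)
    simp only [hF]
    rw [dif_pos (by omega : (i : ℕ) + 1 < n + 1)]
  have hsplit : ∑ i ∈ Finset.range (n + 1), F i
      = F 0 + ∑ i ∈ Finset.range n, F (i + 1) := by
    have h1 : n + 1 = 1 + n := by omega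
    rw [h1, Finset.sum_range_add, Finset.sum_range_one]
    congr 1
    refine Finset.sum_congr rfl (fun i _ => ?_)
    congr 1
    omega
  have hF0 : F 0 = t ⟨0, by omega⟩ (π ⟨0, by omega⟩) (π ⟨1, by omega⟩) := by
    simp only [hF]
    rw [dif_pos (by omega : 0 < n + 1)]
  simp only [pathCost, hmain, hsuf, hsplit, hF0]
  ring

lemma cost_split (w p q : ℕ) (a : Fin w → ℝ)
    (t : Fin (p + q + 2) → Fin w → Fin w → ℝ) (b : Fin w → ℝ)
    (π : Fin (p + q + 3) → Fin w) :
    pathCost w (p + q + 2) a t b π =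
      pathCost w p a (fun i => t ⟨i.val, by omega⟩)
          (fun y => t ⟨p, by omega⟩ y (π ⟨p + 1, by omega⟩))
          (fun j => π ⟨j.val, by omega⟩) +
        pathCost w q (fun y => t ⟨p + 1, by omega⟩ (π ⟨p + 1, by omega⟩) y)
          (fun i => t ⟨p + 2 + i.val, by omega⟩) b
          (fun j => π ⟨p + 2 + j.val, by omega⟩) := by
  classical
  set F : ℕ → ℝ := fun i =>
    if h : i < p + q + 2 then
      t ⟨i, h⟩ (π ⟨i, by omega⟩) (π ⟨i + 1, by omega⟩)
    else 0 with hF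
  have hmain : (∑ i : Fin (p + q + 2), t i (π ⟨i.val, by omega⟩) (π ⟨i.val + 1, by omega⟩))
      = ∑ i ∈ Finset.range (p + q + 2), F i := by
    rw [← Fin.sum_univ_eq_sum_range]
    refine Finset.sum_congr rfl (fun i _ => ?_)
    simp only [hF]
    rw [dif_pos i.isLt]
  have hpre : (∑ i : Fin p, t ⟨i.val, by omega⟩
        (π ⟨i.val, by omega⟩) (π ⟨i.val + 1, by omega⟩))
      = ∑ i ∈ Finset.range p, F i := by
    rw [← Fin.sum_univ_eq_sum_range]
    refine Finset.sum_congr rfl (fun i _ => ?_)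
    simp only [hF]
    rw [dif_pos (by omega : (i : ℕ) < p + q + 2)]
  have hsuf : (∑ i : Fin q, t ⟨p + 2 + i.val, by omega⟩
        (π ⟨p + 2 + i.val, by omega⟩) (π ⟨p + 2 + (i.val + 1), by omega⟩))
      = ∑ i ∈ Finset.range q, F (p + 2 + i) := by
    rw [← Fin.sum_univ_eq_sum_range (fun i => F (p + 2 + i))]
    refine Finset.sum_congr rfl (fun i _ => ?_)
    simp only [hF]
    rw [dif_pos (by omega : p + 2 + (i : ℕ) < p + q + 2)]
    rw [show (⟨p + 2 + ((i : ℕ) + 1), by omega⟩ : Fin (p + q + 3))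
        = ⟨p + 2 + (i : ℕ) + 1, by omega⟩ from by congr 1]
  have hsplit : ∑ i ∈ Finset.range (p + q + 2), F i
      = (∑ i ∈ Finset.range p, F i) + F p + F (p + 1)
        + ∑ i ∈ Finset.range q, F (p + 2 + i) := by
    have h1 : p + q + 2 = p + (q + 2) := by omega
    rw [h1, Finset.sum_range_add]
    have h2 : q + 2 = 2 + q := by omega
    rw [h2, Finset.sum_range_add]
    have h3 : ∑ i ∈ Finset.range 2, F (p + i) = F p + F (p + 1) := by
      rw [Finset.sum_range_succ, Finset.sum_range_one, Nat.add_zero]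
    rw [h3]
    have h4 : ∀ i ∈ Finset.range q, F (p + (2 + i)) = F (p + 2 + i) := by
      intro i _; congr 1; omega
    rw [Finset.sum_congr rfl h4]
    ring
  have hFp : F p = t ⟨p, by omega⟩ (π ⟨p, by omega⟩) (π ⟨p + 1, by omega⟩) := by
    simp only [hF]
    rw [dif_pos (by omega : p < p + q + 2)]
  have hFp1 : F (p + 1) = t ⟨p + 1, by omega⟩ (π ⟨p + 1, by omega⟩) (π ⟨p + 2, by omega⟩) := by
    simp only [hF]
    rw [dif_pos (by omega : p + 1 < p + q + 2)]
  simp only [pathCost, hmain, hpre, hsuf, hsplit, hFp, hFp1]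
  rw [show ((⟨p + 2 + q, by omega⟩ : Fin (p+q+3))) = ⟨p + q + 2, by omega⟩ from by congr 1; omega]
  ring
def pairSet (w n : ℕ) (a₁ : Fin w → ℝ) (t₁ : Fin n → Fin w → Fin w → ℝ) (b₁ : Fin w → ℝ)
    (a₂ : Fin w → ℝ) (t₂ : Fin n → Fin w → Fin w → ℝ) (b₂ : Fin w → ℝ) : Set V2 :=
  Set.range (fun π : Fin (n + 1) → Fin w =>
    ![pathCost w n a₁ t₁ b₁ π, pathCost w n a₂ t₂ b₂ π])

lemma vec_add (x₁ y₁ x₂ y₂ : ℝ) :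
    (![x₁ + x₂, y₁ + y₂] : V2) = ![x₁, y₁] + ![x₂, y₂] := by
  funext i
  fin_cases i <;> simp

def extend0 (w n : ℕ) (x : Fin w) (τ : Fin (n + 1) → Fin w) : Fin (n + 2) → Fin w :=
  fun i => if h : i.val = 0 then x else τ ⟨i.val - 1, by omega⟩

lemma extend0_zero (w n : ℕ) (x : Fin w) (τ : Fin (n + 1) → Fin w) (h : 0 < n + 2) :
    extend0 w n x τ ⟨0, h⟩ = x := dif_pos rfl

lemma extend0_rest (w n : ℕ) (x : Fin w) (τ : Fin (n + 1) → Fin w) :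
    (fun j : Fin (n + 1) => extend0 w n x τ ⟨j.val + 1, by omega⟩) = τ := by
  funext j
  unfold extend0
  rw [dif_neg (Nat.succ_ne_zero j.val)]
  congr 1

lemma pairSet_split0 (w n : ℕ) (a₁ : Fin w → ℝ) (t₁ : Fin (n+1) → Fin w → Fin w → ℝ)
    (b₁ : Fin w → ℝ) (a₂ : Fin w → ℝ) (t₂ : Fin (n+1) → Fin w → Fin w → ℝ) (b₂ : Fin w → ℝ) :
    pairSet w (n+1) a₁ t₁ b₁ a₂ t₂ b₂ =
      ⋃ x : Fin w, ({![a₁ x, a₂ x]} : Set V2) +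
        pairSet w n (fun y => t₁ ⟨0, by omega⟩ x y) (fun i => t₁ ⟨i.val + 1, by omega⟩) b₁
          (fun y => t₂ ⟨0, by omega⟩ x y) (fun i => t₂ ⟨i.val + 1, by omega⟩) b₂ := by
  ext v
  simp only [pairSet, Set.mem_range, Set.mem_iUnion]
  constructor
  · rintro ⟨π, rfl⟩
    refine ⟨π ⟨0, by omega⟩, Set.mem_add.2
      ⟨![a₁ (π ⟨0, by omega⟩), a₂ (π ⟨0, by omega⟩)], rfl,
       ![pathCost w n (fun y => t₁ ⟨0, by omega⟩ (π ⟨0, by omega⟩) y)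
           (fun i => t₁ ⟨i.val + 1, by omega⟩) b₁ (fun j => π ⟨j.val + 1, by omega⟩),
         pathCost w n (fun y => t₂ ⟨0, by omega⟩ (π ⟨0, by omega⟩) y)
           (fun i => t₂ ⟨i.val + 1, by omega⟩) b₂ (fun j => π ⟨j.val + 1, by omega⟩)],
       ⟨fun j => π ⟨j.val + 1, by omega⟩, rfl⟩, ?_⟩⟩
    rw [← vec_add, ← cost_split0, ← cost_split0]
  · rintro ⟨x, hv⟩
    rw [Set.mem_add] at hv
    obtain ⟨u, hu, z, ⟨τ, rfl⟩, rfl⟩ := hv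
    rw [Set.mem_singleton_iff] at hu
    subst hu
    refine ⟨extend0 w n x τ, ?_⟩
    rw [cost_split0 w n a₁ t₁ b₁, cost_split0 w n a₂ t₂ b₂, extend0_zero, extend0_rest,
      vec_add]

def extend (w p q : ℕ) (x : Fin w) (σ : Fin (p + 1) → Fin w) (τ : Fin (q + 1) → Fin w) :
    Fin (p + q + 3) → Fin w :=
  fun i => if h : i.val ≤ p then σ ⟨i.val, by omega⟩
    else if h2 : i.val = p + 1 then x else τ ⟨i.val - (p + 2), by omega⟩

lemma extend_pre (w p q : ℕ) (x : Fin w) (σ : Fin (p + 1) → Fin w) (τ : Fin (q + 1) → Fin w) :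
    (fun j : Fin (p + 1) => extend w p q x σ τ ⟨j.val, by omega⟩) = σ := by
  funext j
  unfold extend
  rw [dif_pos (by exact Nat.lt_succ_iff.mp j.isLt)]

lemma extend_mid (w p q : ℕ) (x : Fin w) (σ : Fin (p + 1) → Fin w) (τ : Fin (q + 1) → Fin w)
    (h : p + 1 < p + q + 3) :
    extend w p q x σ τ ⟨p + 1, h⟩ = x := by
  unfold extend
  rw [dif_neg (by exact Nat.not_succ_le_self p), dif_pos rfl]

lemma extend_suf (w p q : ℕ) (x : Fin w) (σ : Fin (p + 1) → Fin w) (τ : Fin (q + 1) → Fin w) :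
    (fun j : Fin (q + 1) => extend w p q x σ τ ⟨p + 2 + j.val, by omega⟩) = τ := by
  funext j
  unfold extend
  rw [dif_neg (show ¬(p + 2 + (j : ℕ) ≤ p) by omega),
    dif_neg (show ¬(p + 2 + (j : ℕ) = p + 1) by omega)]
  apply congrArg
  apply Fin.ext
  show p + 2 + (j : ℕ) - (p + 2) = (j : ℕ)
  omega

lemma pairSet_split (w p q : ℕ) (a₁ : Fin w → ℝ) (t₁ : Fin (p+q+2) → Fin w → Fin w → ℝ)
    (b₁ : Fin w → ℝ) (a₂ : Fin w → ℝ) (t₂ : Fin (p+q+2) → Fin w → Fin w → ℝ)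
    (b₂ : Fin w → ℝ) :
    pairSet w (p+q+2) a₁ t₁ b₁ a₂ t₂ b₂ =
      ⋃ x : Fin w,
        pairSet w p a₁ (fun i => t₁ ⟨i.val, by omega⟩) (fun y => t₁ ⟨p, by omega⟩ y x)
          a₂ (fun i => t₂ ⟨i.val, by omega⟩) (fun y => t₂ ⟨p, by omega⟩ y x) +
        pairSet w q (fun y => t₁ ⟨p+1, by omega⟩ x y) (fun i => t₁ ⟨p+2+i.val, by omega⟩) b₁
          (fun y => t₂ ⟨p+1, by omega⟩ x y) (fun i => t₂ ⟨p+2+i.val, by omega⟩) b₂ := by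
  ext v
  simp only [pairSet, Set.mem_range, Set.mem_iUnion]
  constructor
  · rintro ⟨π, rfl⟩
    refine ⟨π ⟨p + 1, by omega⟩, Set.mem_add.2
      ⟨![pathCost w p a₁ (fun i => t₁ ⟨i.val, by omega⟩)
           (fun y => t₁ ⟨p, by omega⟩ y (π ⟨p + 1, by omega⟩)) (fun j => π ⟨j.val, by omega⟩),
         pathCost w p a₂ (fun i => t₂ ⟨i.val, by omega⟩)
           (fun y => t₂ ⟨p, by omega⟩ y (π ⟨p + 1, by omega⟩)) (fun j => π ⟨j.val, by omega⟩)],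
       ⟨fun j => π ⟨j.val, by omega⟩, rfl⟩,
       ![pathCost w q (fun y => t₁ ⟨p+1, by omega⟩ (π ⟨p + 1, by omega⟩) y)
           (fun i => t₁ ⟨p+2+i.val, by omega⟩) b₁ (fun j => π ⟨p+2+j.val, by omega⟩),
         pathCost w q (fun y => t₂ ⟨p+1, by omega⟩ (π ⟨p + 1, by omega⟩) y)
           (fun i => t₂ ⟨p+2+i.val, by omega⟩) b₂ (fun j => π ⟨p+2+j.val, by omega⟩)],
       ⟨fun j => π ⟨p+2+j.val, by omega⟩, rfl⟩, ?_⟩⟩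
    rw [← vec_add, ← cost_split, ← cost_split]
  · rintro ⟨x, hv⟩
    rw [Set.mem_add] at hv
    obtain ⟨u, ⟨σ, rfl⟩, z, ⟨τ, rfl⟩, rfl⟩ := hv
    refine ⟨extend w p q x σ τ, ?_⟩
    rw [cost_split w p q a₁ t₁ b₁, cost_split w p q a₂ t₂ b₂, extend_mid, extend_pre,
      extend_suf, vec_add]
lemma pairSet_zero (w : ℕ) (a₁ : Fin w → ℝ) (t₁ : Fin 0 → Fin w → Fin w → ℝ) (b₁ : Fin w → ℝ)
    (a₂ : Fin w → ℝ) (t₂ : Fin 0 → Fin w → Fin w → ℝ) (b₂ : Fin w → ℝ) :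
    pairSet w 0 a₁ t₁ b₁ a₂ t₂ b₂ =
      ⋃ x : Fin w, ({![a₁ x + b₁ x, a₂ x + b₂ x]} : Set V2) := by
  ext v
  simp only [pairSet, Set.mem_range, Set.mem_iUnion, Set.mem_singleton_iff]
  constructor
  · rintro ⟨π, rfl⟩
    refine ⟨π ⟨0, by omega⟩, ?_⟩
    simp [pathCost]
  · rintro ⟨x, rfl⟩
    refine ⟨fun _ => x, ?_⟩
    simp [pathCost]

lemma clog_two_two : Nat.clog 2 2 = 1 := Nat.clog_eq_one (by norm_num) (by norm_num)

lemma clog_two_three : Nat.clog 2 3 = 2 := by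
  have h1 : (3 + 2 - 1) / 2 = 2 := by norm_num
  rw [Nat.clog_of_two_le one_lt_two (by norm_num), h1,
    Nat.clog_eq_one (by norm_num) (by norm_num)]

lemma pairSet_good (w : ℕ) (hw : 1 ≤ w) (n : ℕ) :
    ∀ (a₁ : Fin w → ℝ) (t₁ : Fin n → Fin w → Fin w → ℝ) (b₁ : Fin w → ℝ)
      (a₂ : Fin w → ℝ) (t₂ : Fin n → Fin w → Fin w → ℝ) (b₂ : Fin w → ℝ),
      Good w (Nat.clog 2 (n + 2)) (pairSet w n a₁ t₁ b₁ a₂ t₂ b₂) := by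
  induction n using Nat.strong_induction_on with
  | _ n ih =>
  intro a₁ t₁ b₁ a₂ t₂ b₂
  rcases Nat.lt_or_ge n 2 with h2 | h2
  · interval_cases n
    · -- n = 0
      rw [show (0 + 2 : ℕ) = 2 from rfl, clog_two_two]
      have heq : pairSet w 0 a₁ t₁ b₁ a₂ t₂ b₂ =
          ⋃ x : Fin w, ({![a₁ x + b₁ x, a₂ x + b₂ x]} : Set V2) + ({0} : Set V2) := by
        rw [pairSet_zero]
        simp only [add_zero_set]
      rw [heq]
      exact Good.step _ _ (fun x => Good.single _) (fun x => Good.single _)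
    · -- n = 1
      rw [show (1 + 2 : ℕ) = 3 from rfl, clog_two_three]
      rw [pairSet_split0]
      refine Good.step _ _ (fun x => Good.singleton_all hw 1 _) (fun x => ?_)
      have := ih 0 (by omega) (fun y => t₁ ⟨0, by omega⟩ x y)
        (fun i => t₁ ⟨i.val + 1, by omega⟩) b₁
        (fun y => t₂ ⟨0, by omega⟩ x y) (fun i => t₂ ⟨i.val + 1, by omega⟩) b₂
      rwa [show (0 + 2 : ℕ) = 2 from rfl, clog_two_two] at this
  · obtain ⟨p, q, hpq1, hpq2, rfl⟩ : ∃ p q, p ≤ q + 1 ∧ q ≤ p + 1 ∧ n = p + q + 2 :=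
      ⟨(n - 2) / 2, n - 2 - (n - 2) / 2, by omega, by omega, by omega⟩
    rw [pairSet_split]
    have hkey : Nat.clog 2 (p + q + 2 + 2) = Nat.clog 2 ((p + q + 5) / 2) + 1 := by
      rw [Nat.clog_of_two_le one_lt_two (by omega)]
      congr 2
    rw [hkey]
    refine Good.step _ _ (fun x => ?_) (fun x => ?_)
    · exact Good.mono hw
        (Nat.clog_mono_right 2 (by omega : p + 2 ≤ (p + q + 5) / 2))
        (ih p (by omega) _ _ _ _ _ _)
    · exact Good.mono hw
        (Nat.clog_mono_right 2 (by omega : q + 2 ≤ (p + q + 5) / 2))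
        (ih q (by omega) _ _ _ _ _ _)

end LG
end LG

/-- for a layered graph with `ℓ` layers of width `w` and two cost systems
with cost functions `f` and `g`, the set `V = conv({(f(π), g(π))}) + ℝ²₊` has at most
`(2w)^⌈log₂(ℓ+1)⌉` extreme points. -/
theorem layered_graph_extreme_points_bound
    (ℓ w : ℕ) (hℓ : 1 ≤ ℓ) (hw : 1 ≤ w)
    (a₁ : Fin w → ℝ) (t₁ : Fin (ℓ - 1) → Fin w → Fin w → ℝ) (b₁ : Fin w → ℝ)
    (a₂ : Fin w → ℝ) (t₂ : Fin (ℓ - 1) → Fin w → Fin w → ℝ) (b₂ : Fin w → ℝ) :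
    ((convexHull ℝ
        ((fun π : Fin ℓ → Fin w =>
            ![layeredCost ℓ w hℓ a₁ t₁ b₁ π, layeredCost ℓ w hℓ a₂ t₂ b₂ π]) ''
          Set.univ) +
      {v : Fin 2 → ℝ | 0 ≤ v}).extremePoints ℝ).ncard ≤
      (2 * w) ^ (Nat.clog 2 (ℓ + 1)) := by
  obtain ⟨n, rfl⟩ : ∃ n, ℓ = n + 1 := ⟨ℓ - 1, by omega⟩
  have hedge : ((fun π : Fin (n + 1) → Fin w =>
      ![layeredCost (n + 1) w hℓ a₁ t₁ b₁ π, layeredCost (n + 1) w hℓ a₂ t₂ b₂ π]) ''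
      Set.univ) = LG.pairSet w n a₁ t₁ b₁ a₂ t₂ b₂ := by
    rw [Set.image_univ]
    rfl
  rw [hedge]
  have hGood := LG.pairSet_good w hw n a₁ t₁ b₁ a₂ t₂ b₂
  have hfin : (LG.pairSet w n a₁ t₁ b₁ a₂ t₂ b₂).Finite := hGood.finite
  calc ((convexHull ℝ (LG.pairSet w n a₁ t₁ b₁ a₂ t₂ b₂) +
          {v : Fin 2 → ℝ | 0 ≤ v}).extremePoints ℝ).ncard
      ≤ (LG.Exp (LG.pairSet w n a₁ t₁ b₁ a₂ t₂ b₂)).ncard := by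
        refine Set.ncard_le_ncard (LG.extreme_subset_Exp hfin) ?_
        exact hfin.subset (LG.Exp_subset _)
    _ ≤ (2 * w) ^ (Nat.clog 2 (n + 2)) := hGood.count
end

section
/- Let n ≥ 1, let X ⊆ {0,1}ⁿ be finite and nonempty, let ĉ ∈ ℝⁿ with ĉ ≥ 0 componentwise, and let d ∈ ℝⁿ with dᵢ > 0 for all i. Define F : X → ℝ² by F(x) = (ĉᵀx, maxᵢ dᵢxᵢ), and let V = conv(F(X)) + ℝ²₊. Then the number of extreme points of V is at most n. -/
open Pointwise

section Aux

lemma gm_mem_pos {v : Fin 2 → ℝ} (h : 0 ≤ v) : v ∈ {u : Fin 2 → ℝ | 0 ≤ u} := h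

/-- The set `conv S + ℝ²₊` absorbs addition of nonnegative vectors. -/
lemma gm_absorb {S : Set (Fin 2 → ℝ)} {v w : Fin 2 → ℝ}
    (hv : v ∈ convexHull ℝ S + {u : Fin 2 → ℝ | 0 ≤ u}) (hw : 0 ≤ w) :
    v + w ∈ convexHull ℝ S + {u : Fin 2 → ℝ | 0 ≤ u} := by
  rcases hv with ⟨p, hp, c, hc, rfl⟩
  exact ⟨p, hp, c + w, gm_mem_pos (add_nonneg hc hw), (add_assoc _ _ _).symm⟩

lemma gm_conv_subset {S : Set (Fin 2 → ℝ)} :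
    convexHull ℝ S ⊆ convexHull ℝ S + {u : Fin 2 → ℝ | 0 ≤ u} := fun q hq => by
  simpa using Set.add_mem_add hq (gm_mem_pos (le_refl (0 : Fin 2 → ℝ)))

/-- Extreme points of `conv S + ℝ²₊` lie in `S`. -/
lemma gm_extreme_subset {S : Set (Fin 2 → ℝ)} {e : Fin 2 → ℝ}
    (he : e ∈ (convexHull ℝ S + {u : Fin 2 → ℝ | 0 ≤ u}).extremePoints ℝ) :
    e ∈ S := by
  obtain ⟨heV, hext⟩ := he
  obtain ⟨p, hp, c, hc, hpc⟩ := heV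
  replace hpc : p + c = e := hpc
  have hc2 : (0 : Fin 2 → ℝ) ≤ 2 • c := smul_nonneg (by norm_num) hc
  have h1 : p ∈ convexHull ℝ S + {u : Fin 2 → ℝ | 0 ≤ u} := gm_conv_subset hp
  have h2 : p + 2 • c ∈ convexHull ℝ S + {u : Fin 2 → ℝ | 0 ≤ u} :=
    Set.add_mem_add hp (gm_mem_pos hc2)
  have hmem : e ∈ openSegment ℝ p (p + 2 • c) :=
    ⟨1/2, 1/2, by norm_num, by norm_num, by norm_num, by rw [← hpc]; module⟩
  obtain hpe := hext h1 h2 hmem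
  have hc0 : c = 0 := by
    have : p + c = p := by rw [hpc, ← hpe]
    simpa using this
  have hep : e = p := by rw [← hpc, hc0, add_zero]
  subst hep
  -- `e` is an extreme point of `convexHull ℝ S`
  refine extremePoints_convexHull_subset ⟨hp, fun x hx y hy hxy => ?_⟩
  exact hext (gm_conv_subset hx) (gm_conv_subset hy) hxy

end Aux

/-- for `X ⊆ {0,1}ⁿ`, `ĉ ≥ 0`, `d > 0`, and `F(x) = (ĉᵀx, maxᵢ dᵢxᵢ)`
(the bicriteria problem arising from the generalized Manhattan norm), the set
`V = conv(F(X)) + ℝ²₊` has at most `n` extreme points. -/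
theorem generalized_manhattan_extreme_points_le_n
    {n : ℕ} (hn : 1 ≤ n) (X : Finset (Fin n → ℝ)) (hXne : X.Nonempty)
    (hX01 : ∀ x ∈ X, ∀ i, x i = 0 ∨ x i = 1)
    (chat : Fin n → ℝ) (hchat : ∀ i, 0 ≤ chat i)
    (d : Fin n → ℝ) (hd : ∀ i, 0 < d i) :
    ((convexHull ℝ
        ((fun x => ![∑ i, chat i * x i, ⨆ i, d i * x i]) '' (X : Set (Fin n → ℝ))) +
      {v : Fin 2 → ℝ | 0 ≤ v}).extremePoints ℝ).ncard ≤ n := by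
  classical
  have hne : Nonempty (Fin n) := ⟨⟨0, hn⟩⟩
  set F : (Fin n → ℝ) → (Fin 2 → ℝ) :=
    fun x => ![∑ i, chat i * x i, ⨆ i, d i * x i] with hF
  set S : Set (Fin 2 → ℝ) := F '' (X : Set (Fin n → ℝ)) with hSdef
  set V : Set (Fin 2 → ℝ) := convexHull ℝ S + {v : Fin 2 → ℝ | 0 ≤ v} with hVdef
  set E : Set (Fin 2 → ℝ) := V.extremePoints ℝ with hEdef
  -- extreme points are in S
  have hES : E ⊆ S := fun e he => gm_extreme_subset he
  have hFx1 : ∀ x, F x 1 = ⨆ i, d i * x i := by intro x; simp [hF]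
  have hFx0 : ∀ x, F x 0 = ∑ i, chat i * x i := by intro x; simp [hF]
  -- every point of S is nonnegative
  have hSnn : ∀ s ∈ S, (0 : Fin 2 → ℝ) ≤ s := by
    rintro s ⟨x, hxX, rfl⟩
    have h0 : (0 : ℝ) ≤ ∑ i, chat i * x i := by
      refine Finset.sum_nonneg fun i _ => ?_
      rcases hX01 x hxX i with h | h <;> simp [h, hchat i]
    have h1 : (0 : ℝ) ≤ ⨆ i, d i * x i := by
      refine le_trans (mul_nonneg (hd (Classical.arbitrary _)).le ?_)
        (le_ciSup (f := fun i => d i * x i)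
          (Set.Finite.bddAbove (Set.finite_range _)) (Classical.arbitrary _))
      rcases hX01 x hxX (Classical.arbitrary _) with h | h <;> simp [h]
    intro j
    fin_cases j
    · exact h0
    · exact h1
  have hVnn : ∀ v ∈ V, (0 : Fin 2 → ℝ) ≤ v := by
    rintro v ⟨p, hp, c, hc, rfl⟩
    have hpnn : p ∈ {u : Fin 2 → ℝ | 0 ≤ u} :=
      convexHull_min (fun s hs => gm_mem_pos (hSnn s hs)) (convex_Ici (0 : Fin 2 → ℝ)) hp
    exact add_nonneg hpnn hc
  by_cases hz : ∃ x ∈ X, ∀ i, x i = 0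
  · -- the zero vector is in X, so 0 ∈ S and E ⊆ {0}
    obtain ⟨x0, hx0X, hx00⟩ := hz
    have hF0 : F x0 = 0 := by
      have e0 : F x0 0 = 0 := by rw [hFx0]; simp [hx00]
      have e1 : F x0 1 = 0 := by rw [hFx1]; simp [hx00, ciSup_const]
      funext j
      fin_cases j
      · exact e0
      · exact e1
    have h0V : (0 : Fin 2 → ℝ) ∈ V := by
      rw [← hF0]
      exact gm_conv_subset (subset_convexHull ℝ S ⟨x0, hx0X, rfl⟩)
    have hE1 : E ⊆ {0} := by
      intro e he
      have heV : e ∈ V := he.1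
      have he0 : (0 : Fin 2 → ℝ) ≤ e := hVnn e heV
      have hee : e + e ∈ V := gm_absorb heV he0
      have hmem : e ∈ openSegment ℝ (0 : Fin 2 → ℝ) (e + e) :=
        ⟨1/2, 1/2, by norm_num, by norm_num, by norm_num, by module⟩
      obtain h0e := he.2 h0V hee hmem
      exact h0e.symm
    calc E.ncard ≤ ({0} : Set (Fin 2 → ℝ)).ncard :=
          Set.ncard_le_ncard hE1 (Set.finite_singleton _)
      _ = 1 := Set.ncard_singleton _
      _ ≤ n := hn
  · -- every x ∈ X has a coordinate equal to 1
    push_neg at hz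
    -- second coordinates of points of S lie in the range of d
    have hS1 : ∀ s ∈ S, s 1 ∈ Set.range d := by
      rintro s ⟨x, hxX, rfl⟩
      obtain ⟨i0, hi0⟩ := hz x hxX
      have hxi0 : x i0 = 1 := (hX01 x hxX i0).resolve_left hi0
      obtain ⟨j, hj⟩ := exists_eq_ciSup_of_finite (f := fun i => d i * x i)
      have hpos : (0 : ℝ) < d j * x j := by
        rw [hj]
        calc (0 : ℝ) < d i0 := hd i0
          _ = d i0 * x i0 := by rw [hxi0, mul_one]
          _ ≤ ⨆ i, d i * x i := le_ciSup (f := fun i => d i * x i)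
              (Set.Finite.bddAbove (Set.finite_range _)) i0
      have hxj : x j = 1 := by
        rcases hX01 x hxX j with h | h
        · rw [h, mul_zero] at hpos; exact absurd hpos (lt_irrefl 0)
        · exact h
      refine ⟨j, ?_⟩
      rw [hFx1, ← hj, hxj, mul_one]
    -- the dominated point argument
    have key : ∀ a ∈ E, ∀ b ∈ E, b 0 < a 0 → a 1 = b 1 → False := by
      intro a ha b hb hlt h1
      have habnn : (0 : Fin 2 → ℝ) ≤ a - b := by
        intro j
        fin_cases j
        · exact sub_nonneg.mpr hlt.le
        · exact sub_nonneg.mpr h1.symm.le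
      have hgV : a + (a - b) ∈ V := gm_absorb ha.1 habnn
      have hmem : a ∈ openSegment ℝ b (a + (a - b)) :=
        ⟨1/2, 1/2, by norm_num, by norm_num, by norm_num, by module⟩
      obtain hba := ha.2 hb.1 hgV hmem
      rw [hba] at hlt
      exact lt_irrefl _ hlt
    have hinj : Set.InjOn (fun v => v 1) E := by
      intro e he f hf h1
      by_contra hneq
      have h0 : e 0 ≠ f 0 := by
        intro h
        refine hneq (funext fun j => ?_)
        fin_cases j
        · exact h
        · exact h1
      rcases lt_or_gt_of_ne h0 with h | h
      · exact (key f hf e he h h1.symm).elim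
      · exact (key e he f hf h h1).elim
    have hrange : (fun v : Fin 2 → ℝ => v 1) '' E ⊆ Set.range d := by
      rintro y ⟨e, he, rfl⟩
      exact hS1 e (hES he)
    calc E.ncard = ((fun v : Fin 2 → ℝ => v 1) '' E).ncard :=
          (Set.ncard_image_of_injOn hinj).symm
      _ ≤ (Set.range d).ncard :=
          Set.ncard_le_ncard hrange (Set.finite_range d)
      _ = (d '' Set.univ).ncard := by rw [Set.image_univ]
      _ ≤ (Set.univ : Set (Fin n)).ncard := Set.ncard_image_le Set.finite_univ
      _ = n := by rw [Set.ncard_univ, Nat.card_eq_fintype_card, Fintype.card_fin]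
end

section
/- Let n ≥ 1, let X ⊆ {0,1}ⁿ be finite and nonempty, let ĉ ∈ ℝⁿ with ĉ ≥ 0 componentwise, and let d ∈ ℝⁿ with dᵢ > 0 for all i. Then there exists a set S ⊆ X with |S| ≤ n such that for every λ ≥ 0 some x ∈ S minimizes ĉᵀx + λ·maxᵢ dᵢxᵢ over X; that is, the variable-sized min-max robust problem with the generalized Manhattan norm admits a solution set of size at most n. -/
/-- the variable-sized min-max robust problem with the generalized
Manhattan norm (objective `ĉᵀx + λ·maxᵢ dᵢxᵢ`) admits a solution set `S ⊆ X` with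
`|S| ≤ n` containing an optimal solution for every uncertainty size `λ ≥ 0`. -/
theorem variable_sized_generalized_manhattan_solution_set
    {n : ℕ} (hn : 1 ≤ n) (X : Finset (Fin n → ℝ)) (hXne : X.Nonempty)
    (hX01 : ∀ x ∈ X, ∀ i, x i = 0 ∨ x i = 1)
    (chat : Fin n → ℝ) (hchat : ∀ i, 0 ≤ chat i)
    (d : Fin n → ℝ) (hd : ∀ i, 0 < d i) :
    ∃ S : Finset (Fin n → ℝ), S ⊆ X ∧ S.card ≤ n ∧
      ∀ lam : ℝ, 0 ≤ lam → ∃ x ∈ S, ∀ y ∈ X,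
        (∑ i, chat i * x i) + lam * (⨆ i, d i * x i) ≤
          (∑ i, chat i * y i) + lam * (⨆ i, d i * y i) := by
  classical
  haveI : Inhabited (Fin n) := ⟨⟨0, hn⟩⟩
  set M : (Fin n → ℝ) → ℝ := fun x => ⨆ i, d i * x i with hM
  have hbdd : ∀ x : Fin n → ℝ, BddAbove (Set.range fun i => d i * x i) :=
    fun x => (Set.finite_range _).bddAbove
  have hsum0 : ∀ x ∈ X, (0:ℝ) ≤ ∑ i, chat i * x i := by
    intro x hx
    refine Finset.sum_nonneg fun i _ => mul_nonneg (hchat i) ?_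
    rcases hX01 x hx i with h | h <;> simp [h]
  have hM0 : ∀ x ∈ X, (0:ℝ) ≤ M x := by
    intro x hx
    have : (0:ℝ) ≤ d default * x default := by
      rcases hX01 x hx default with h | h <;> simp [h, (hd default).le]
    exact this.trans (le_ciSup (hbdd x) default)
  by_cases hzero : ∃ x ∈ X, ∀ i, x i = 0
  · obtain ⟨x0, hx0X, hx0⟩ := hzero
    refine ⟨{x0}, by simpa using hx0X, by simpa using hn, fun lam hlam => ?_⟩
    refine ⟨x0, Finset.mem_singleton_self _, fun y hy => ?_⟩
    have h1 : (∑ i, chat i * x0 i) = 0 := by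
      apply Finset.sum_eq_zero; intro i _; simp [hx0 i]
    have h2 : M x0 = 0 := by
      have : (fun i => d i * x0 i) = fun _ => (0:ℝ) := by
        funext i; simp [hx0 i]
      simp [hM, this]
    rw [h1, show (⨆ i, d i * x0 i) = 0 from h2]
    have := hsum0 y hy
    have := hM0 y hy
    nlinarith
  · push_neg at hzero
    -- every x ∈ X has M x = d j for some j with x j = 1
    have key : ∀ x ∈ X, ∃ j, x j = 1 ∧ M x = d j := by
      intro x hx
      obtain ⟨j, hj⟩ := Finite.exists_max (fun i => d i * x i)
      obtain ⟨i1, hi1⟩ := hzero x hx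
      have hxi1 : x i1 = 1 := (hX01 x hx i1).resolve_left hi1
      have hxj : x j = 1 := by
        rcases hX01 x hx j with h | h
        · exfalso
          have := hj i1
          rw [h, hxi1] at this
          nlinarith [hd i1]
        · exact h
      refine ⟨j, hxj, ?_⟩
      have : M x = d j * x j :=
        le_antisymm (ciSup_le hj) (le_ciSup (hbdd x) j)
      simpa [hxj] using this
    -- for each j, choose a minimizer of the linear cost among {x ∈ X | M x = d j}
    set T : Finset (Fin n) :=
      Finset.univ.filter (fun j => (X.filter (fun x => M x = d j)).Nonempty) with hT
    have hs : ∀ j ∈ T, ∃ b ∈ X.filter (fun x => M x = d j),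
        ∀ y ∈ X.filter (fun x => M x = d j), (∑ i, chat i * b i) ≤ ∑ i, chat i * y i := by
      intro j hj
      rw [hT, Finset.mem_filter] at hj
      exact Finset.exists_min_image _ (fun x => ∑ i, chat i * x i) hj.2
    choose s hsmem hsmin using hs
    refine ⟨T.attach.image (fun j => s j.1 j.2), ?_, ?_, ?_⟩
    · intro x hx
      simp only [Finset.mem_image] at hx
      obtain ⟨j, _, rfl⟩ := hx
      exact (Finset.mem_filter.mp (hsmem j.1 j.2)).1
    · calc (T.attach.image (fun j => s j.1 j.2)).card ≤ T.attach.card :=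
            Finset.card_image_le
        _ = T.card := Finset.card_attach
        _ ≤ n := (Finset.card_filter_le _ _).trans (by simp)
    · intro lam hlam
      obtain ⟨xs, hxsX, hxsmin⟩ := Finset.exists_min_image X
        (fun x => (∑ i, chat i * x i) + lam * M x) hXne
      obtain ⟨j, hxsj, hMxs⟩ := key xs hxsX
      have hjT : j ∈ T := by
        rw [hT, Finset.mem_filter]
        exact ⟨Finset.mem_univ j, ⟨xs, Finset.mem_filter.mpr ⟨hxsX, hMxs⟩⟩⟩
      refine ⟨s j hjT, Finset.mem_image.mpr ⟨⟨j, hjT⟩, Finset.mem_attach _ _, rfl⟩,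
        fun y hy => ?_⟩
      have h1 := Finset.mem_filter.mp (hsmem j hjT)
      have h2 : (∑ i, chat i * (s j hjT) i) ≤ ∑ i, chat i * xs i :=
        hsmin j hjT xs (Finset.mem_filter.mpr ⟨hxsX, hMxs⟩)
      have h3 : M (s j hjT) = d j := h1.2
      have h4 := hxsmin y hy
      calc (∑ i, chat i * (s j hjT) i) + lam * M (s j hjT)
          ≤ (∑ i, chat i * xs i) + lam * M xs := by rw [h3, hMxs]; linarith
        _ ≤ (∑ i, chat i * y i) + lam * M y := h4
end

section
/- Let X ⊆ {0,1}ⁿ be finite and nonempty, let c ∈ ℝⁿ, and let d ∈ ℝⁿ with d ≥ 0 componentwise. Let V₁ = conv({(cᵀx, √(dᵀx)) : x ∈ X}) + ℝ²₊ and V₂ = conv({(cᵀx, dᵀx) : x ∈ X}) + ℝ²₊. If x' ∈ X is such that (cᵀx', √(dᵀx')) is an extreme point of V₁, then (cᵀx', dᵀx') is an extreme point of V₂; that is, every efficient extreme solution of min_{x∈X}(cᵀx, √(dᵀx)) is an efficient extreme solution of min_{x∈X}(cᵀx, dᵀx). -/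
open Pointwise

/-- every efficient extreme solution of `min_{x∈X} (cᵀx, √(dᵀx))` is an
efficient extreme solution of `min_{x∈X} (cᵀx, dᵀx)`: if `(cᵀx', √(dᵀx'))` is an extreme
point of `V₁ = conv({(cᵀx, √(dᵀx)) : x ∈ X}) + ℝ²₊`, then `(cᵀx', dᵀx')` is an extreme
point of `V₂ = conv({(cᵀx, dᵀx) : x ∈ X}) + ℝ²₊`. -/
theorem sqrt_extreme_implies_linear_extreme
    {n : ℕ} (X : Finset (Fin n → ℝ)) (hXne : X.Nonempty)
    (hX01 : ∀ x ∈ X, ∀ i, x i = 0 ∨ x i = 1)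
    (c d : Fin n → ℝ) (hd : ∀ i, 0 ≤ d i)
    (x' : Fin n → ℝ) (hx' : x' ∈ X)
    (hext : ![∑ i, c i * x' i, Real.sqrt (∑ i, d i * x' i)] ∈
      (convexHull ℝ
          ((fun x => ![∑ i, c i * x i, Real.sqrt (∑ i, d i * x i)]) '' (X : Set (Fin n → ℝ))) +
        {v : Fin 2 → ℝ | 0 ≤ v}).extremePoints ℝ) :
    ![∑ i, c i * x' i, ∑ i, d i * x' i] ∈
      (convexHull ℝ
          ((fun x => ![∑ i, c i * x i, ∑ i, d i * x i]) '' (X : Set (Fin n → ℝ))) +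
        {v : Fin 2 → ℝ | 0 ≤ v}).extremePoints ℝ := by
  classical
  set P : Set (Fin 2 → ℝ) := {v | 0 ≤ v} with hPdef
  set S₁ : Set (Fin 2 → ℝ) :=
    ((fun x => ![∑ i, c i * x i, Real.sqrt (∑ i, d i * x i)]) '' (X : Set (Fin n → ℝ))) with hS₁
  set S₂ : Set (Fin 2 → ℝ) :=
    ((fun x => ![∑ i, c i * x i, ∑ i, d i * x i]) '' (X : Set (Fin n → ℝ))) with hS₂
  set V₁ : Set (Fin 2 → ℝ) := convexHull ℝ S₁ + P with hV₁
  set V₂ : Set (Fin 2 → ℝ) := convexHull ℝ S₂ + P with hV₂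
  have hPzero : (0 : Fin 2 → ℝ) ∈ P := fun i => le_rfl
  have hPconv : Convex ℝ P := by
    intro v hv w hw a b ha hb hab
    intro i
    simpa using add_nonneg (mul_nonneg ha (hv i)) (mul_nonneg hb (hw i))
  have hPadd : ∀ v ∈ P, ∀ w ∈ P, v + w ∈ P := fun v hv w hw i => add_nonneg (hv i) (hw i)
  have hV₁conv : Convex ℝ V₁ := (convex_convexHull ℝ S₁).add hPconv
  have hV₁P : ∀ q ∈ V₁, ∀ w ∈ P, q + w ∈ V₁ := by
    rintro q hq w hw
    rcases Set.mem_add.1 hq with ⟨u, hu, v, hv, rfl⟩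
    exact Set.mem_add.2 ⟨u, hu, v + w, hPadd v hv w hw, (add_assoc u v w).symm⟩
  have hdx : ∀ x ∈ X, (0:ℝ) ≤ ∑ i, d i * x i := by
    intro x hx
    refine Finset.sum_nonneg fun i _ => mul_nonneg (hd i) ?_
    rcases hX01 x hx i with h | h <;> simp [h]
  have hsqrtcc := Real.strictConcaveOn_sqrt.concaveOn
  -- the key set
  set T : Set (Fin 2 → ℝ) :=
    {q | 0 ≤ q 1 ∧ ∃ p ∈ V₁, p 0 = q 0 ∧ p 1 ≤ Real.sqrt (q 1)} with hT
  have hTconv : Convex ℝ T := by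
    rintro q ⟨hq1, p, hp, hp0, hp1⟩ q' ⟨hq'1, p', hp', hp'0, hp'1⟩ a b ha hb hab
    refine ⟨?_, a • p + b • p', hV₁conv hp hp' ha hb hab, ?_, ?_⟩
    · simpa using add_nonneg (mul_nonneg ha hq1) (mul_nonneg hb hq'1)
    · simp [hp0, hp'0]
    · have hjen : a • Real.sqrt (q 1) + b • Real.sqrt (q' 1)
          ≤ Real.sqrt (a • q 1 + b • q' 1) :=
        hsqrtcc.2 hq1 hq'1 ha hb hab
      have : a * p 1 + b * p' 1 ≤ a * Real.sqrt (q 1) + b * Real.sqrt (q' 1) := by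
        gcongr
      simpa using this.trans hjen
  have hS₂T : S₂ ⊆ T := by
    rintro _ ⟨x, hx, rfl⟩
    refine ⟨by simpa using hdx x hx,
      ![∑ i, c i * x i, Real.sqrt (∑ i, d i * x i)], ?_, by simp, by simp⟩
    exact Set.mem_add.2 ⟨_, subset_convexHull ℝ S₁ ⟨x, hx, rfl⟩, 0, hPzero, add_zero _⟩
  have hC₂T : convexHull ℝ S₂ ⊆ T := convexHull_min hS₂T hTconv
  -- consequence for all of V₂
  have hkey : ∀ q ∈ V₂, 0 ≤ q 1 ∧ ![q 0, Real.sqrt (q 1)] ∈ V₁ := by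
    rintro q hq
    rcases Set.mem_add.1 hq with ⟨u, hu, w, hw, rfl⟩
    obtain ⟨hu1, p, hp, hp0, hp1⟩ := hC₂T hu
    have hw0 : 0 ≤ w 0 := hw 0
    have hw1 : 0 ≤ w 1 := hw 1
    have hq1 : 0 ≤ (u + w) 1 := by simpa using add_nonneg hu1 hw1
    refine ⟨hq1, ?_⟩
    have hle : p 1 ≤ Real.sqrt ((u + w) 1) := by
      refine hp1.trans (Real.sqrt_le_sqrt ?_)
      simp only [Pi.add_apply]
      linarith
    have : ![(u + w) 0, Real.sqrt ((u + w) 1)] = p + ![(u+w) 0 - p 0, Real.sqrt ((u+w) 1) - p 1] := by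
      funext i
      fin_cases i <;> simp
    rw [this]
    refine hV₁P p hp _ ?_
    intro i
    fin_cases i
    · simpa [hp0] using hw0
    · simpa using sub_nonneg.2 hle
  -- notation for the points
  set t' : ℝ := ∑ i, d i * x' i with ht'
  have ht'0 : 0 ≤ t' := hdx x' hx'
  rw [mem_extremePoints] at hext ⊢
  obtain ⟨hmem1, hstar⟩ := hext
  constructor
  · exact Set.mem_add.2 ⟨_, subset_convexHull ℝ S₂ ⟨x', hx', rfl⟩, 0, hPzero, add_zero _⟩
  rintro q hq r hr ⟨a, b, ha, hb, hab, hcomb⟩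
  obtain ⟨hq1, hqV⟩ := hkey q hq
  obtain ⟨hr1, hrV⟩ := hkey r hr
  have hc0 : a * q 0 + b * r 0 = ∑ i, c i * x' i := by
    have := congrFun hcomb 0; simpa using this
  have hc1 : a * q 1 + b * r 1 = t' := by
    have := congrFun hcomb 1; simpa using this
  -- concavity defect
  set s : ℝ := Real.sqrt t' - (a * Real.sqrt (q 1) + b * Real.sqrt (r 1)) with hs
  have hs0 : 0 ≤ s := by
    have hjen : a • Real.sqrt (q 1) + b • Real.sqrt (r 1)
        ≤ Real.sqrt (a • q 1 + b • r 1) := hsqrtcc.2 hq1 hr1 ha.le hb.le hab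
    simp only [smul_eq_mul] at hjen
    rw [hc1] at hjen
    simpa [hs] using sub_nonneg.2 hjen
  set Q : Fin 2 → ℝ := ![q 0, Real.sqrt (q 1) + s] with hQ
  set R : Fin 2 → ℝ := ![r 0, Real.sqrt (r 1) + s] with hR
  have hQV : Q ∈ V₁ := by
    have : Q = ![q 0, Real.sqrt (q 1)] + ![0, s] := by
      funext i; fin_cases i <;> simp [hQ]
    rw [this]
    refine hV₁P _ hqV _ ?_
    intro i; fin_cases i <;> simpa using hs0
  have hRV : R ∈ V₁ := by
    have : R = ![r 0, Real.sqrt (r 1)] + ![0, s] := by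
      funext i; fin_cases i <;> simp [hR]
    rw [this]
    refine hV₁P _ hrV _ ?_
    intro i; fin_cases i <;> simpa using hs0
  have hseg : ![∑ i, c i * x' i, Real.sqrt t'] ∈ openSegment ℝ Q R := by
    refine ⟨a, b, ha, hb, hab, ?_⟩
    funext i
    fin_cases i
    · simpa [hQ, hR] using hc0
    · show a * (Real.sqrt (q 1) + s) + b * (Real.sqrt (r 1) + s) = Real.sqrt t'
      rw [hs]
      linear_combination (Real.sqrt t' - (a * Real.sqrt (q 1) + b * Real.sqrt (r 1))) * hab
  have := hstar Q hQV R hRV hseg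
  obtain ⟨hQeq, hReq⟩ := this
  have hq0 : q 0 = ∑ i, c i * x' i := by
    have := congrFun hQeq 0; simpa [hQ] using this
  have hr0 : r 0 = ∑ i, c i * x' i := by
    have := congrFun hReq 0; simpa [hR] using this
  have hq1' : Real.sqrt (q 1) + s = Real.sqrt t' := by
    have := congrFun hQeq 1; simpa [hQ] using this
  have hr1' : Real.sqrt (r 1) + s = Real.sqrt t' := by
    have := congrFun hReq 1; simpa [hR] using this
  have hsq : Real.sqrt (q 1) = Real.sqrt (r 1) := by linarith
  have hq1r1 : q 1 = r 1 := (Real.sqrt_inj hq1 hr1).1 hsq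
  have hqr : q = r := by
    funext i
    fin_cases i
    · exact hq0.trans hr0.symm
    · exact hq1r1
  have hqp : q = ![∑ i, c i * x' i, ∑ i, d i * x' i] := by
    have : a • q + b • r = q := by
      rw [← hqr, ← add_smul, hab, one_smul]
    rw [← this, hcomb]
  exact ⟨hqp, hqr ▸ hqp⟩
end

section
/- Let X ⊆ {0,1}ⁿ be finite and nonempty, let c ∈ ℝⁿ, and let Q be a positive definite real n×n matrix. Let V₁ = conv({(cᵀx, √(xᵀQx)) : x ∈ X}) + ℝ²₊ and V₂ = conv({(cᵀx, xᵀQx) : x ∈ X}) + ℝ²₊. If x' ∈ X is such that (cᵀx', √(x'ᵀQx')) is an extreme point of V₁, then (cᵀx', x'ᵀQx') is an extreme point of V₂; that is, every efficient extreme solution of min_{x∈X}(cᵀx, √(xᵀQx)) is an efficient extreme solution of min_{x∈X}(cᵀx, xᵀQx). -/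
open Pointwise Matrix

private lemma sqrt_concave_aux {a b ta tb : ℝ} (ha : 0 ≤ a) (hb : 0 ≤ b)
    (hta : 0 ≤ ta) (htb : 0 ≤ tb) (htab : ta + tb = 1) :
    ta * Real.sqrt a + tb * Real.sqrt b ≤ Real.sqrt (ta * a + tb * b) := by
  have := Real.strictConcaveOn_sqrt.concaveOn.2 (Set.mem_Ici.2 ha) (Set.mem_Ici.2 hb)
    hta htb htab
  simpa [smul_eq_mul] using this

private lemma sqrt_strict_concave_aux {a b ta tb : ℝ} (ha : 0 ≤ a) (hb : 0 ≤ b)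
    (hab : a ≠ b) (hta : 0 < ta) (htb : 0 < tb) (htab : ta + tb = 1) :
    ta * Real.sqrt a + tb * Real.sqrt b < Real.sqrt (ta * a + tb * b) := by
  have := Real.strictConcaveOn_sqrt.2 (Set.mem_Ici.2 ha) (Set.mem_Ici.2 hb)
    hab hta htb htab
  simpa [smul_eq_mul] using this

/-- every efficient extreme solution of `min_{x∈X} (cᵀx, √(xᵀQx))` is an
efficient extreme solution of `min_{x∈X} (cᵀx, xᵀQx)`, where `Q` is positive definite. -/
theorem ellipsoidal_sqrt_extreme_implies_quadratic_extreme
    {n : ℕ} (X : Finset (Fin n → ℝ)) (hXne : X.Nonempty)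
    (hX01 : ∀ x ∈ X, ∀ i, x i = 0 ∨ x i = 1)
    (c : Fin n → ℝ) (Q : Matrix (Fin n) (Fin n) ℝ) (hQ : Q.PosDef)
    (x' : Fin n → ℝ) (hx' : x' ∈ X)
    (hext : ![∑ i, c i * x' i, Real.sqrt (x' ⬝ᵥ Q *ᵥ x')] ∈
      (convexHull ℝ
          ((fun x => ![∑ i, c i * x i, Real.sqrt (x ⬝ᵥ Q *ᵥ x)]) '' (X : Set (Fin n → ℝ))) +
        {v : Fin 2 → ℝ | 0 ≤ v}).extremePoints ℝ) :
    ![∑ i, c i * x' i, x' ⬝ᵥ Q *ᵥ x'] ∈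
      (convexHull ℝ
          ((fun x => ![∑ i, c i * x i, x ⬝ᵥ Q *ᵥ x]) '' (X : Set (Fin n → ℝ))) +
        {v : Fin 2 → ℝ | 0 ≤ v}).extremePoints ℝ := by
  classical
  set f : (Fin n → ℝ) → (Fin 2 → ℝ) := fun x => ![∑ i, c i * x i, Real.sqrt (x ⬝ᵥ Q *ᵥ x)]
  set g : (Fin n → ℝ) → (Fin 2 → ℝ) := fun x => ![∑ i, c i * x i, x ⬝ᵥ Q *ᵥ x]
  set Cf : Set (Fin 2 → ℝ) := convexHull ℝ (f '' (X : Set (Fin n → ℝ)))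
  set Cg : Set (Fin 2 → ℝ) := convexHull ℝ (g '' (X : Set (Fin n → ℝ)))
  set P : Set (Fin 2 → ℝ) := {v : Fin 2 → ℝ | 0 ≤ v}
  have hqnn : ∀ x : Fin n → ℝ, 0 ≤ x ⬝ᵥ Q *ᵥ x := by
    intro x
    have := hQ.posSemidef.re_dotProduct_nonneg x
    simpa using this
  have hPconv : Convex ℝ P := convex_Ici (0 : Fin 2 → ℝ)
  have hVconv : Convex ℝ (Cf + P) := (convex_convexHull ℝ _).add hPconv
  -- upward closedness of Cf + P
  have hup : ∀ u ∈ Cf + P, ∀ d : Fin 2 → ℝ, 0 ≤ d → u + d ∈ Cf + P := by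
    intro u hu d hd
    obtain ⟨a, ha, p, hp, rfl⟩ := Set.mem_add.1 hu
    exact Set.mem_add.2 ⟨a, ha, p + d, add_nonneg hp hd, by abel⟩
  -- domination lemma: points of Cg dominate (after sqrt) points of Cf
  have dom : ∀ a ∈ Cg, 0 ≤ a 1 ∧ ∃ u ∈ Cf, u 0 ≤ a 0 ∧ u 1 ≤ Real.sqrt (a 1) := by
    intro a ha
    have hsub : Cg ⊆ {a : Fin 2 → ℝ | 0 ≤ a 1 ∧ ∃ u ∈ Cf, u 0 ≤ a 0 ∧ u 1 ≤ Real.sqrt (a 1)} := by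
      apply convexHull_min
      · rintro _ ⟨x, hx, rfl⟩
        refine ⟨hqnn x, f x, subset_convexHull ℝ _ ⟨x, hx, rfl⟩, le_refl _, ?_⟩
        simp [f, g]
      · rintro a ⟨ha1, u, hu, hu0, hu1⟩ b ⟨hb1, v, hv, hv0, hv1⟩ ta tb h0a h0b hab
        refine ⟨?_, ta • u + tb • v, (convex_convexHull ℝ _) hu hv h0a h0b hab, ?_, ?_⟩
        · have : (0:ℝ) ≤ ta * a 1 + tb * b 1 :=
            add_nonneg (mul_nonneg h0a ha1) (mul_nonneg h0b hb1)
          simpa [smul_eq_mul] using this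
        · have : ta * u 0 + tb * v 0 ≤ ta * a 0 + tb * b 0 :=
            add_le_add (mul_le_mul_of_nonneg_left hu0 h0a) (mul_le_mul_of_nonneg_left hv0 h0b)
          simpa [smul_eq_mul] using this
        · have h1 : ta * u 1 + tb * v 1 ≤ ta * Real.sqrt (a 1) + tb * Real.sqrt (b 1) :=
            add_le_add (mul_le_mul_of_nonneg_left hu1 h0a) (mul_le_mul_of_nonneg_left hv1 h0b)
          have h2 := sqrt_concave_aux ha1 hb1 h0a h0b hab
          have := h1.trans h2
          simpa [smul_eq_mul] using this
    exact hsub ha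
  -- φ maps Cg + P into Cf + P
  have hphi : ∀ w ∈ Cg + P, 0 ≤ w 1 ∧ ![w 0, Real.sqrt (w 1)] ∈ Cf + P := by
    intro w hw
    obtain ⟨aw, haw, pw, hpw, rfl⟩ := Set.mem_add.1 hw
    obtain ⟨ha1, u, huC, hu0, hu1⟩ := dom aw haw
    have hw1 : 0 ≤ (aw + pw) 1 := add_nonneg ha1 (hpw 1)
    have hp0 : (0:ℝ) ≤ pw 0 := hpw 0
    have hp1 : (0:ℝ) ≤ pw 1 := hpw 1
    have hkey0 : u 0 ≤ (aw + pw) 0 := by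
      simp only [Pi.add_apply]
      linarith
    have hkey1 : u 1 ≤ Real.sqrt ((aw + pw) 1) := by
      refine hu1.trans (Real.sqrt_le_sqrt ?_)
      simp only [Pi.add_apply]
      linarith
    refine ⟨hw1, Set.mem_add.2 ⟨u, huC, ![(aw + pw) 0, Real.sqrt ((aw + pw) 1)] - u, ?_, ?_⟩⟩
    · show (0:Fin 2 → ℝ) ≤ ![(aw + pw) 0, Real.sqrt ((aw + pw) 1)] - u
      rw [Pi.le_def]
      intro i
      fin_cases i
      · simpa using sub_nonneg.2 hkey0
      · simpa using sub_nonneg.2 hkey1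
    · abel
  rw [mem_extremePoints] at hext ⊢
  obtain ⟨hfmem, hext⟩ := hext
  constructor
  · exact Set.mem_add.2 ⟨g x', subset_convexHull ℝ _ ⟨x', hx', rfl⟩, 0,
      show (0 : Fin 2 → ℝ) ≤ 0 from le_refl 0, add_zero _⟩
  intro y hy z hz hseg
  obtain ⟨ta, tb, hta, htb, htab, heq⟩ := hseg
  set A : ℝ := ∑ i, c i * x' i
  set q' : ℝ := x' ⬝ᵥ Q *ᵥ x'
  have eq0 : ta * y 0 + tb * z 0 = A := by
    have := congrFun heq 0; simpa [smul_eq_mul] using this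
  have eq1 : ta * y 1 + tb * z 1 = q' := by
    have := congrFun heq 1; simpa [smul_eq_mul] using this
  obtain ⟨hy1, hφy⟩ := hphi y hy
  obtain ⟨hz1, hφz⟩ := hphi z hz
  set s : ℝ := ta * Real.sqrt (y 1) + tb * Real.sqrt (z 1)
  have hPx : ta • ![y 0, Real.sqrt (y 1)] + tb • ![z 0, Real.sqrt (z 1)] = ![A, s] := by
    funext i
    fin_cases i
    · simpa [smul_eq_mul] using eq0
    · simp [s, smul_eq_mul]
  have hPxmem : (![A, s] : Fin 2 → ℝ) ∈ Cf + P := hPx ▸ hVconv hφy hφz hta.le htb.le htab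
  have hsle : s ≤ Real.sqrt q' := by
    have := sqrt_concave_aux hy1 hz1 hta.le htb.le htab
    rwa [eq1] at this
  have hseq : s = Real.sqrt q' := by
    rcases hsle.lt_or_eq with hlt | h
    · exfalso
      set d : Fin 2 → ℝ := ![0, 2 * (Real.sqrt q' - s)]
      have hd : (0:Fin 2 → ℝ) ≤ d := by
        rw [Pi.le_def]
        intro i
        fin_cases i
        · simp [d]
        · simp only [d]
          simp
          linarith
      have hP' : ![A, s] + d ∈ Cf + P := hup _ hPxmem d hd
      have hmid : f x' ∈ openSegment ℝ ![A, s] (![A, s] + d) := by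
        refine ⟨1/2, 1/2, by norm_num, by norm_num, by norm_num, ?_⟩
        funext i
        fin_cases i <;> simp [f, d, A, q', smul_eq_mul] <;> ring
      have := hext _ hPxmem _ hP' hmid
      have h0 := congrFun this.1 1
      simp [f, A, q'] at h0
      exact absurd h0 (ne_of_lt hlt)
    · exact h
  have hyz1 : y 1 = z 1 := by
    by_contra hne
    have := sqrt_strict_concave_aux hy1 hz1 hne hta htb htab
    rw [eq1] at this
    exact absurd hseq (ne_of_lt this)
  have hy1q : y 1 = q' := by
    have : (ta + tb) * y 1 = q' := by rw [← eq1, hyz1]; ring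
    rwa [htab, one_mul] at this
  have hz1q : z 1 = q' := hyz1 ▸ hy1q
  have hmid2 : f x' ∈ openSegment ℝ ![y 0, Real.sqrt (y 1)] ![z 0, Real.sqrt (z 1)] := by
    refine ⟨ta, tb, hta, htb, htab, ?_⟩
    rw [hPx]
    funext i
    fin_cases i
    · simp [f, A]
    · have hs' : s = Real.sqrt q' := hseq
      have : (![A, s] : Fin 2 → ℝ) 1 = s := by simp
      simp only [f]
      simp [hs']
      rfl
  obtain ⟨hyeq, hzeq⟩ := hext _ hφy _ hφz hmid2
  have hy0 : y 0 = A := by simpa [f, A] using congrFun hyeq 0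
  have hz0 : z 0 = A := by simpa [f, A] using congrFun hzeq 0
  constructor
  · funext i; fin_cases i
    · simpa [g, A] using hy0
    · simpa [g, q'] using hy1q
  · funext i; fin_cases i
    · simpa [g, A] using hz0
    · simpa [g, q'] using hz1q
end

section
/- Let X ⊆ {0,1}ⁿ be finite and nonempty, let ĉ ∈ ℝⁿ with ĉ ≥ 0 componentwise, and let x ∈ {0,1}ⁿ. Define reg(x,λ) = max_{c∈U(λ)} ( cᵀx − min_{y∈X} cᵀy ) with U(λ) = {c : (1−λ)ĉᵢ ≤ cᵢ ≤ (1+λ)ĉᵢ for all i}. Then the function λ ↦ reg(x,λ) is monotonically nondecreasing and convex on [0,1]. -/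
/-- for the regular interval uncertainty set
`U(λ) = {c : (1-λ)ĉᵢ ≤ cᵢ ≤ (1+λ)ĉᵢ}` with `ĉ ≥ 0` and binary `x`, the regret
`λ ↦ reg(x,λ) = max_{c∈U(λ)} (cᵀx − min_{y∈X} cᵀy)` is monotonically nondecreasing
and convex on `[0,1]`. -/
theorem regret_monotone_and_convex
    {n : ℕ} (X : Finset (Fin n → ℝ)) (hX : X.Nonempty)
    (hX01 : ∀ y ∈ X, ∀ i, y i = 0 ∨ y i = 1)
    (chat : Fin n → ℝ) (hchat : ∀ i, 0 ≤ chat i)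
    (x : Fin n → ℝ) (hx : ∀ i, x i = 0 ∨ x i = 1) :
    MonotoneOn
      (fun lam : ℝ => sSup
        ((fun c : Fin n → ℝ =>
            (∑ i, c i * x i) - X.inf' hX (fun y => ∑ i, c i * y i)) ''
          {c : Fin n → ℝ | ∀ i, (1 - lam) * chat i ≤ c i ∧ c i ≤ (1 + lam) * chat i}))
      (Set.Icc (0 : ℝ) 1) ∧
    ConvexOn ℝ (Set.Icc (0 : ℝ) 1)
      (fun lam : ℝ => sSup
        ((fun c : Fin n → ℝ =>
            (∑ i, c i * x i) - X.inf' hX (fun y => ∑ i, c i * y i)) ''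
          {c : Fin n → ℝ | ∀ i, (1 - lam) * chat i ≤ c i ∧ c i ≤ (1 + lam) * chat i})) := by
  -- Abbreviations
  set g : ℝ → (Fin n → ℝ) → ℝ := fun lam y =>
    (∑ i, chat i * (x i - y i)) + lam * ∑ i, chat i * |x i - y i| with hg
  have key : ∀ lam : ℝ, 0 ≤ lam →
      sSup ((fun c : Fin n → ℝ =>
            (∑ i, c i * x i) - X.inf' hX (fun y => ∑ i, c i * y i)) ''
          {c : Fin n → ℝ | ∀ i, (1 - lam) * chat i ≤ c i ∧ c i ≤ (1 + lam) * chat i})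
        = X.sup' hX (g lam) := by
    intro lam hl0
    -- termwise bound
    have hterm : ∀ ci d chi : ℝ, 0 ≤ chi → (1 - lam) * chi ≤ ci → ci ≤ (1 + lam) * chi →
        ci * d ≤ chi * d + lam * (chi * |d|) := by
      intro ci d chi h0 h1 h2
      rcases le_or_gt 0 d with hd | hd
      · rw [abs_of_nonneg hd]; nlinarith
      · rw [abs_of_neg hd]; nlinarith
    -- upper bound
    have hub : ∀ c : Fin n → ℝ,
        (∀ i, (1 - lam) * chat i ≤ c i ∧ c i ≤ (1 + lam) * chat i) →
        (∑ i, c i * x i) - X.inf' hX (fun y => ∑ i, c i * y i) ≤ X.sup' hX (g lam) := by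
      intro c hc
      obtain ⟨y0, hy0, hy0eq⟩ := X.exists_mem_eq_inf' hX (fun y => ∑ i, c i * y i)
      rw [hy0eq]
      refine le_trans ?_ (Finset.le_sup' (g lam) hy0)
      have : (∑ i, c i * x i) - (∑ i, c i * y0 i)
          = ∑ i, c i * (x i - y0 i) := by
        rw [← Finset.sum_sub_distrib]; congr 1; ext i; ring
      rw [this, hg]
      simp only
      rw [Finset.mul_sum, ← Finset.sum_add_distrib]
      exact Finset.sum_le_sum fun i _ => hterm (c i) (x i - y0 i) (chat i)
        (hchat i) (hc i).1 (hc i).2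
    -- the box is nonempty (chat itself)
    have hmem : ∀ i, (1 - lam) * chat i ≤ chat i ∧ chat i ≤ (1 + lam) * chat i := by
      intro i
      constructor <;> nlinarith [hchat i]
    -- bddAbove of the image
    have hbdd : BddAbove ((fun c : Fin n → ℝ =>
            (∑ i, c i * x i) - X.inf' hX (fun y => ∑ i, c i * y i)) ''
          {c : Fin n → ℝ | ∀ i, (1 - lam) * chat i ≤ c i ∧ c i ≤ (1 + lam) * chat i}) := by
      refine ⟨X.sup' hX (g lam), ?_⟩
      rintro _ ⟨c, hc, rfl⟩
      exact hub c hc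
    -- the witness attaining the sup
    obtain ⟨ystar, hystar, hystareq⟩ := X.exists_mem_eq_sup' hX (g lam)
    set cstar : Fin n → ℝ := fun i =>
      if 0 ≤ x i - ystar i then (1 + lam) * chat i else (1 - lam) * chat i with hcs
    have hcsmem : ∀ i, (1 - lam) * chat i ≤ cstar i ∧ cstar i ≤ (1 + lam) * chat i := by
      intro i
      by_cases hd : 0 ≤ x i - ystar i <;>
        simp only [hcs, if_pos, if_neg, hd, ite_true, ite_false] <;>
        constructor <;> nlinarith [hchat i]
    have hattain : (∑ i, cstar i * x i) - X.inf' hX (fun y => ∑ i, cstar i * y i)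
        = X.sup' hX (g lam) := by
      refine le_antisymm (hub cstar hcsmem) ?_
      rw [hystareq]
      have h1 : X.inf' hX (fun y => ∑ i, cstar i * y i) ≤ ∑ i, cstar i * ystar i :=
        Finset.inf'_le _ hystar
      have h2 : g lam ystar = ∑ i, cstar i * (x i - ystar i) := by
        rw [hg]
        simp only
        rw [Finset.mul_sum, ← Finset.sum_add_distrib]
        refine Finset.sum_congr rfl fun i _ => ?_
        rcases le_or_gt 0 (x i - ystar i) with hd | hd
        · simp only [hcs, if_pos hd, abs_of_nonneg hd]; ring
        · simp only [hcs, if_neg (not_le.mpr hd), abs_of_neg hd]; ring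
      have h3 : ∑ i, cstar i * (x i - ystar i)
          = (∑ i, cstar i * x i) - (∑ i, cstar i * ystar i) := by
        rw [← Finset.sum_sub_distrib]; congr 1; ext i; ring
      rw [h2, h3]
      linarith
    refine le_antisymm ?_ ?_
    · refine csSup_le ⟨_, Set.mem_image_of_mem _ (fun i => hmem i)⟩ ?_
      rintro _ ⟨c, hc, rfl⟩
      exact hub c hc
    · rw [← hattain]
      exact le_csSup hbdd (Set.mem_image_of_mem _ hcsmem)
  -- slopes are nonnegative
  have hslope : ∀ y : Fin n → ℝ, 0 ≤ ∑ i, chat i * |x i - y i| :=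
    fun y => Finset.sum_nonneg fun i _ => mul_nonneg (hchat i) (abs_nonneg _)
  constructor
  · -- Monotone
    intro a ha b hb hab
    simp only
    rw [key a ha.1, key b hb.1]
    refine Finset.sup'_le _ _ fun y hy => ?_
    refine le_trans ?_ (Finset.le_sup' (g b) hy)
    rw [hg]
    simp only
    have := hslope y
    nlinarith
  · -- Convex
    refine ⟨convex_Icc 0 1, ?_⟩
    intro p hp q hq a b ha hb hab
    simp only [smul_eq_mul]
    have hcomb : a * p + b * q ∈ Set.Icc (0 : ℝ) 1 :=
      (convex_Icc (0:ℝ) 1) hp hq ha hb hab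
    rw [key p hp.1, key q hq.1, key _ hcomb.1]
    obtain ⟨y, hy, hyeq⟩ := X.exists_mem_eq_sup' hX (g (a * p + b * q))
    rw [hyeq]
    have h1 : g p y ≤ X.sup' hX (g p) := Finset.le_sup' (g p) hy
    have h2 : g q y ≤ X.sup' hX (g q) := Finset.le_sup' (g q) hy
    have h3 : g (a * p + b * q) y = a * g p y + b * g q y := by
      rw [hg]; simp only
      linear_combination (-(∑ i : Fin n, chat i * (x i - y i))) * hab
    rw [h3]
    have := mul_le_mul_of_nonneg_left h1 ha
    have := mul_le_mul_of_nonneg_left h2 hb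
    linarith
end

section
/- Consider the unconstrained combinatorial problem with X = {0,1}ⁿ, nominal costs ĉ ∈ ℝⁿ, and deviations d⁺, d⁻ ∈ ℝⁿ with d⁺ ≥ 0 and d⁻ ≥ 0, giving the interval uncertainty set U(d⁺,d⁻) = {c : ĉᵢ − dᵢ⁻ ≤ cᵢ ≤ ĉᵢ + dᵢ⁺ for all i}. Define x* ∈ {0,1}ⁿ by x*ᵢ = 1 if 2ĉᵢ + dᵢ⁺ − dᵢ⁻ ≤ 0 and x*ᵢ = 0 otherwise. Then x* minimizes the regret reg(x) = max_{c∈U(d⁺,d⁻)} ( cᵀx − min_{y∈{0,1}ⁿ} cᵀy ) over all x ∈ {0,1}ⁿ. -/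
/-- The binary cube `{0,1}ⁿ`, feasible set of the unconstrained combinatorial problem. -/
def binaryCube (n : ℕ) : Set (Fin n → ℝ) := {y | ∀ i, y i = 0 ∨ y i = 1}

/-- The min-max regret of `x` for the unconstrained combinatorial problem with general
interval uncertainty set `U(d⁺,d⁻) = {c : ĉᵢ − dᵢ⁻ ≤ cᵢ ≤ ĉᵢ + dᵢ⁺}`:
`reg(x) = max_{c∈U(d⁺,d⁻)} ( cᵀx − min_{y∈{0,1}ⁿ} cᵀy )`. -/
noncomputable def ucRegret {n : ℕ} (chat dp dm : Fin n → ℝ) (x : Fin n → ℝ) : ℝ :=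
  sSup ((fun c : Fin n → ℝ =>
      (∑ i, c i * x i) - sInf ((fun y => ∑ i, c i * y i) '' binaryCube n)) ''
    {c : Fin n → ℝ | ∀ i, chat i - dm i ≤ c i ∧ c i ≤ chat i + dp i})

lemma sInf_binaryCube {n : ℕ} (c : Fin n → ℝ) :
    sInf ((fun y => ∑ i, c i * y i) '' binaryCube n) = ∑ i, min (c i) 0 := by
  have hlb : ∀ z ∈ (fun y => ∑ i, c i * y i) '' binaryCube n, ∑ i, min (c i) 0 ≤ z := by
    rintro z ⟨y, hy, rfl⟩
    apply Finset.sum_le_sum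
    intro i _
    rcases hy i with h | h <;> simp [h, min_le_iff]
  have hmem : (∑ i, min (c i) 0) ∈ (fun y => ∑ i, c i * y i) '' binaryCube n := by
    refine ⟨fun i => if c i ≤ 0 then 1 else 0, fun i => ?_, ?_⟩
    · by_cases h : c i ≤ 0 <;> simp [h]
    · apply Finset.sum_congr rfl
      intro i _
      by_cases h : c i ≤ 0 <;> simp [h, min_def, le_of_not_ge]
  exact le_antisymm (csInf_le ⟨_, hlb⟩ hmem) (le_csInf ⟨_, hmem⟩ hlb)

lemma ucRegret_eq {n : ℕ} (chat dp dm : Fin n → ℝ) (hdp : ∀ i, 0 ≤ dp i)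
    (hdm : ∀ i, 0 ≤ dm i) (x : Fin n → ℝ) (hx : x ∈ binaryCube n) :
    ucRegret chat dp dm x =
      ∑ i, (if x i = 1 then max (chat i + dp i) 0 else max (dm i - chat i) 0) := by
  unfold ucRegret
  have hub : ∀ z ∈ (fun c : Fin n → ℝ =>
      (∑ i, c i * x i) - sInf ((fun y => ∑ i, c i * y i) '' binaryCube n)) ''
      {c : Fin n → ℝ | ∀ i, chat i - dm i ≤ c i ∧ c i ≤ chat i + dp i},
      z ≤ ∑ i, (if x i = 1 then max (chat i + dp i) 0 else max (dm i - chat i) 0) := by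
    rintro z ⟨c, hc, rfl⟩
    simp only [sInf_binaryCube, ← Finset.sum_sub_distrib]
    apply Finset.sum_le_sum
    intro i _
    obtain ⟨h1, h2⟩ := hc i
    rcases hx i with h | h <;>
      simp only [h, if_pos rfl, one_ne_zero, zero_ne_one, if_false, mul_one, mul_zero] <;>
      · simp only [min_def, max_def]
        split_ifs <;> linarith
  have hmem : (∑ i, (if x i = 1 then max (chat i + dp i) 0 else max (dm i - chat i) 0)) ∈
      (fun c : Fin n → ℝ =>
      (∑ i, c i * x i) - sInf ((fun y => ∑ i, c i * y i) '' binaryCube n)) ''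
      {c : Fin n → ℝ | ∀ i, chat i - dm i ≤ c i ∧ c i ≤ chat i + dp i} := by
    refine ⟨fun i => if x i = 1 then chat i + dp i else chat i - dm i, fun i => ?_, ?_⟩
    · refine ⟨?_, ?_⟩ <;> dsimp only <;> split_ifs <;> linarith [hdp i, hdm i]
    · simp only [sInf_binaryCube, ← Finset.sum_sub_distrib]
      apply Finset.sum_congr rfl
      intro i _
      rcases hx i with h | h <;>
        simp only [h, if_pos rfl, one_ne_zero, zero_ne_one, if_false, mul_one, mul_zero] <;>
        · simp only [min_def, max_def]
          split_ifs <;> linarith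
  exact le_antisymm (csSup_le ⟨_, hmem⟩ hub) (le_csSup ⟨_, hub⟩ hmem)

/-- Lemma on the unconstrained problem: the solution `x*` with `x*ᵢ = 1` iff
`2ĉᵢ + dᵢ⁺ − dᵢ⁻ ≤ 0` minimizes the min-max regret over `{0,1}ⁿ`. -/
theorem unconstrained_regret_optimal_solution
    {n : ℕ} (chat dp dm : Fin n → ℝ) (hdp : ∀ i, 0 ≤ dp i) (hdm : ∀ i, 0 ≤ dm i) :
    (fun i => if 2 * chat i + dp i - dm i ≤ 0 then (1 : ℝ) else 0) ∈ binaryCube n ∧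
    ∀ x ∈ binaryCube n,
      ucRegret chat dp dm (fun i => if 2 * chat i + dp i - dm i ≤ 0 then (1 : ℝ) else 0) ≤
        ucRegret chat dp dm x := by
  have hstar : (fun i => if 2 * chat i + dp i - dm i ≤ 0 then (1 : ℝ) else 0) ∈ binaryCube n := by
    intro i; by_cases h : 2 * chat i + dp i - dm i ≤ 0 <;> simp [h]
  refine ⟨hstar, fun x hx => ?_⟩
  rw [ucRegret_eq chat dp dm hdp hdm _ hstar, ucRegret_eq chat dp dm hdp hdm x hx]
  apply Finset.sum_le_sum
  intro i _
  by_cases h : 2 * chat i + dp i - dm i ≤ 0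
  · rw [if_pos h, if_pos rfl]
    rcases hx i with h' | h'
    · rw [if_neg (by rw [h']; norm_num)]
      exact max_le_max (by linarith) le_rfl
    · rw [if_pos h']
  · rw [if_neg h, if_neg (by norm_num)]
    rcases hx i with h' | h'
    · rw [if_neg (by rw [h']; norm_num)]
    · rw [if_pos h']
      exact max_le_max (by linarith [not_le.mp h]) le_rfl
end
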